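/- arXiv:1309.3441 — 8 statements merged into one kernel-verified Lean document; each statement's English description precedes it below -/
import Mathlib

section
/- For every N > 0 and every k ≥ 1, there exists a word w of length N over an alphabet A_k with k letters whose subword complexity satisfies p_w(n) = min{k^n, N−n+1} for all n with 1 ≤ n ≤ N. Such a word is called a de Bruijn word. -/
/-- The subword complexity of a finite word `w`: the number of distinct
subwords (contiguous factors) of `w` of length `n`. -/
noncomputable def complexity {A : Type*} (w : List A) (n : ℕ) : ℕ :=
  Set.ncard {u : List A | u.length = n ∧ u <:+: w}


open List Finset

set_option linter.unusedSectionVars false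

namespace DeBruijnAux

variable {A : Type*} [Fintype A] [DecidableEq A]

/-- the factor of `w` of length `n` starting at position `i`. -/
def fa (w : List A) (i n : ℕ) : List A := (w.drop i).take n

/-- every word of length `m` occurs in `w`. -/
def Cov (m : ℕ) (w : List A) : Prop := ∀ u : List A, u.length = m → u <:+: w

/-- all factors of length `n` at distinct positions are distinct. -/
def Dist (n : ℕ) (w : List A) : Prop :=
  ∀ i j, i + n ≤ w.length → j + n ≤ w.length → fa w i n = fa w j n → i = j

lemma fa_length {w : List A} {i n : ℕ} (h : i + n ≤ w.length) : (fa w i n).length = n := by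
  simp [fa]; omega

lemma fa_infix (w : List A) (i n : ℕ) : fa w i n <:+: w :=
  ((take_prefix n (w.drop i)).isInfix).trans ((drop_suffix i w).isInfix)

lemma infix_pos {u w : List A} (h : u <:+: w) :
    ∃ i, i + u.length ≤ w.length ∧ u = fa w i u.length := by
  obtain ⟨s, t, rfl⟩ := h
  refine ⟨s.length, by simp, ?_⟩
  simp [fa, drop_append, take_append]

lemma fa_take {w : List A} {s i n : ℕ} (h : i + n ≤ s) : fa (w.take s) i n = fa w i n := by
  simp only [fa, drop_take, take_take]
  congr 1
  omega

lemma fa_fa_left {w : List A} (i : ℕ) {j n : ℕ} (h : j ≤ n) :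
    (fa w i n).take j = fa w i j := by
  simp [fa, take_take, Nat.min_eq_left h]

lemma Dist.mono {w : List A} {n n' : ℕ} (hd : Dist n w) (h : n ≤ n') : Dist n' w := by
  intro i j hi hj he
  refine hd i j (by omega) (by omega) ?_
  have := congrArg (fun l => List.take n l) he
  simpa [fa_fa_left _ h] using this

lemma Dist.take {w : List A} {n : ℕ} (hd : Dist n w) (s : ℕ) : Dist n (w.take s) := by
  intro i j hi hj he
  simp only [length_take] at hi hj
  have hi' : i + n ≤ s := by omega
  have hj' : j + n ≤ s := by omega
  refine hd i j (by omega) (by omega) ?_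
  rwa [fa_take hi', fa_take hj'] at he

lemma Cov.of_infix {w w' : List A} {m : ℕ} (hc : Cov m w) (h : w <:+: w') : Cov m w' :=
  fun u hu => (hc u hu).trans h

/-- the finset of all words of length `n`. -/
noncomputable def allW (A : Type*) [Fintype A] [DecidableEq A] (n : ℕ) : Finset (List A) :=
  (Finset.univ : Finset (List.Vector A n)).image List.Vector.toList

lemma mem_allW {n : ℕ} {u : List A} : u ∈ allW A n ↔ u.length = n := by
  constructor
  · rintro h
    simp only [allW, Finset.mem_image] at h
    obtain ⟨v, -, rfl⟩ := h
    exact v.toList_length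
  · intro h
    simp only [allW, Finset.mem_image]
    exact ⟨⟨u, h⟩, Finset.mem_univ _, rfl⟩

lemma card_allW (n : ℕ) : (allW A n).card = Fintype.card A ^ n := by
  rw [allW, Finset.card_image_of_injective _ List.Vector.toList_injective]
  simp [card_vector]

/-- the finset of factors of `w` of length `n`. -/
noncomputable def Sfin (w : List A) (n : ℕ) : Finset (List A) :=
  (Finset.range (w.length + 1 - n)).image (fun i => fa w i n)

lemma mem_Sfin {w : List A} {n : ℕ} {u : List A} :
    u ∈ Sfin w n ↔ u.length = n ∧ u <:+: w := by
  constructor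
  · intro h
    simp only [Sfin, Finset.mem_image, Finset.mem_range] at h
    obtain ⟨i, hi, rfl⟩ := h
    have : i + n ≤ w.length := by omega
    exact ⟨fa_length this, fa_infix w i n⟩
  · rintro ⟨hl, hinf⟩
    obtain ⟨i, hi, he⟩ := infix_pos hinf
    rw [hl] at hi he
    simp only [Sfin, Finset.mem_image, Finset.mem_range]
    exact ⟨i, by omega, he.symm⟩

lemma Sfin_subset_allW (w : List A) (n : ℕ) : Sfin w n ⊆ allW A n := by
  intro u hu
  rw [mem_allW]
  exact (mem_Sfin.1 hu).1

lemma card_Sfin_of_dist {w : List A} {n : ℕ} (hd : Dist n w) (h : n ≤ w.length) :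
    (Sfin w n).card = w.length + 1 - n := by
  rw [Sfin, Finset.card_image_of_injOn, Finset.card_range]
  intro i hi j hj he
  simp only [Finset.coe_range, Set.mem_Iio] at hi hj
  exact hd i j (by omega) (by omega) he

lemma length_bound {w : List A} {n : ℕ} (hd : Dist n w) (h : n ≤ w.length) :
    w.length + 1 - n ≤ Fintype.card A ^ n := by
  rw [← card_Sfin_of_dist hd h, ← card_allW n]
  exact Finset.card_le_card (Sfin_subset_allW w n)


lemma fa_zero (w : List A) (n : ℕ) : fa w 0 n = w.take n := by simp [fa]

lemma fa_cons {w : List A} {i n : ℕ} (h : i < w.length) :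
    fa w i (n + 1) = w[i] :: fa w (i + 1) n := by
  rw [fa, fa, drop_eq_getElem_cons h, take_succ_cons]

lemma stuck_closed {w : List A} {m : ℕ} (hm : m + 1 ≤ w.length)
    (hd : Dist (m + 1) w)
    (hstuck : ∀ a : A, (fa w (w.length - m) m) ++ [a] <:+: w) :
    w.take m = fa w (w.length - m) m := by
  set L := w.length with hL
  set v := fa w (L - m) m with hv
  have hvlen : v.length = m := fa_length (by omega)
  -- positions of v
  set Pall : Finset ℕ := (Finset.range (L - m + 1)).filter (fun i => fa w i m = v) with hPall
  set P' : Finset ℕ := (Finset.range (L - m)).filter (fun i => fa w i m = v) with hP'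
  -- for each letter a, a position of v ++ [a]
  have hex : ∀ a : A, ∃ i, i + (m + 1) ≤ L ∧ v ++ [a] = fa w i (m + 1) := by
    intro a
    have := infix_pos (hstuck a)
    rwa [show (v ++ [a]).length = m + 1 by simp [hvlen]] at this
  choose F hF1 hF2 using hex
  have hFmem : ∀ a : A, F a ∈ P' := by
    intro a
    have h1 := hF1 a
    have h2 := hF2 a
    simp only [hP', Finset.mem_filter, Finset.mem_range]
    constructor
    · omega
    · have : (fa w (F a) (m + 1)).take m = fa w (F a) m := fa_fa_left _ (by omega)
      rw [← h2] at this
      rw [← this, take_append]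
      simp [hvlen]
  have hcard1 : Fintype.card A ≤ P'.card := by
    refine Finset.card_le_card_of_injOn F (fun a _ => hFmem a) ?_
    intro a _ b _ hab
    have := (hF2 a).trans (hab ▸ (hF2 b).symm)
    simpa using this
  have hsub : insert (L - m) P' ⊆ Pall := by
    intro i hi
    rcases Finset.mem_insert.1 hi with rfl | hi
    · exact Finset.mem_filter.2 ⟨Finset.mem_range.2 (by omega), hv.symm⟩
    · simp only [hP', Finset.mem_filter, Finset.mem_range] at hi
      simp only [hPall, Finset.mem_filter, Finset.mem_range]
      exact ⟨by omega, hi.2⟩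
  have hnm : L - m ∉ P' := by
    simp [hP']
  have hcard2 : Fintype.card A + 1 ≤ Pall.card := by
    have := Finset.card_le_card hsub
    rw [Finset.card_insert_of_notMem hnm] at this
    omega
  -- conclude 0 ∈ Pall
  by_contra hne
  have h0 : (0 : ℕ) ∉ Pall := by
    simp only [hPall, Finset.mem_filter, Finset.mem_range]
    rintro ⟨-, h⟩
    rw [fa_zero] at h
    exact hne h
  -- map to predecessor factors
  have hcard3 : Pall.card ≤ Fintype.card A := by
    have : Pall.card ≤ ((Finset.univ : Finset A).image (fun x => x :: v)).card := by
      refine Finset.card_le_card_of_injOn (fun i => fa w (i - 1) (m + 1)) ?_ ?_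
      · intro i hi
        show fa w (i - 1) (m + 1) ∈ _
        have hi1 : 1 ≤ i := by
          rcases Nat.eq_zero_or_pos i with rfl | h
          · exact absurd hi h0
          · exact h
        simp only [hPall, Finset.mem_coe, Finset.mem_filter, Finset.mem_range] at hi
        have hilt : i - 1 < L := by omega
        have : fa w (i - 1) (m + 1) = w[i-1] :: fa w i m := by
          rw [fa_cons hilt]
          congr 2
          omega
        rw [this, hi.2]
        simp
      · intro i hi j hj hij
        have hi1 : 1 ≤ i := by
          rcases Nat.eq_zero_or_pos i with rfl | h
          · exact absurd hi h0
          · exact h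
        have hj1 : 1 ≤ j := by
          rcases Nat.eq_zero_or_pos j with rfl | h
          · exact absurd hj h0
          · exact h
        simp only [hPall, Finset.coe_filter, Set.mem_setOf_eq, Finset.mem_range] at hi hj
        have := hd (i - 1) (j - 1) (by omega) (by omega) hij
        omega
    calc Pall.card ≤ _ := this
      _ ≤ (Finset.univ : Finset A).card := Finset.card_image_le
      _ = Fintype.card A := rfl
  omega

lemma fa_append_left {w t : List A} {i n : ℕ} (h : i + n ≤ w.length) :
    fa (w ++ t) i n = fa w i n := by
  have := fa_take (w := w ++ t) (s := w.length) h
  rw [take_left] at this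
  exact this.symm

lemma fa_snoc {w : List A} {a : A} {m : ℕ} (h : m ≤ w.length) :
    fa (w ++ [a]) (w.length - m) (m + 1) = fa w (w.length - m) m ++ [a] := by
  rw [fa, fa, drop_append]
  have h1 : w.length - m - w.length = 0 := by omega
  rw [h1]
  simp only [drop_zero]
  have h2 : (w.drop (w.length - m) ++ [a]).length = m + 1 := by
    simp; omega
  rw [take_of_length_le (le_of_eq h2), take_of_length_le]
  simp; omega

lemma all_factors_of_maxlen {w : List A} {m : ℕ} (hd : Dist (m + 1) w)
    (hm : m + 1 ≤ w.length) (hlen : Fintype.card A ^ (m + 1) + m ≤ w.length) :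
    ∀ u : List A, u.length = m + 1 → u <:+: w := by
  have h1 : (Sfin w (m + 1)).card = w.length + 1 - (m + 1) := card_Sfin_of_dist hd hm
  have h2 := length_bound hd hm
  have h3 : (allW A (m + 1)).card ≤ (Sfin w (m + 1)).card := by
    rw [h1, card_allW]; omega
  have h4 := Finset.eq_of_subset_of_card_le (Sfin_subset_allW w (m + 1)) h3
  intro u hu
  have : u ∈ Sfin w (m + 1) := by rw [h4, mem_allW]; exact hu
  exact (mem_Sfin.1 this).2

lemma ext_stuck (m : ℕ) : ∀ (fuel : ℕ) (w : List A), m + 1 ≤ w.length → Dist (m + 1) w →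
    Fintype.card A ^ (m + 1) + m ≤ w.length + fuel →
    ∃ w', w <+: w' ∧ m + 1 ≤ w'.length ∧ Dist (m + 1) w' ∧
      ∀ a : A, (fa w' (w'.length - m) m) ++ [a] <:+: w' := by
  intro fuel
  induction fuel with
  | zero =>
    intro w hm hd hf
    refine ⟨w, prefix_refl w, hm, hd, fun a => ?_⟩
    refine all_factors_of_maxlen hd hm (by omega) _ ?_
    have : (fa w (w.length - m) m).length = m := fa_length (by omega)
    simp [this]
  | succ fuel ih =>
    intro w hm hd hf
    by_cases hst : ∀ a : A, (fa w (w.length - m) m) ++ [a] <:+: w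
    · exact ⟨w, prefix_refl w, hm, hd, hst⟩
    · push_neg at hst
      obtain ⟨a, ha⟩ := hst
      have hlen2 : (w ++ [a]).length = w.length + 1 := by simp
      have hd2 : Dist (m + 1) (w ++ [a]) := by
        intro i j hi hj he
        rw [hlen2] at hi hj
        by_cases hie : i = w.length - m
        · by_cases hje : j = w.length - m
          · omega
          · exfalso
            have hj' : j + (m + 1) ≤ w.length := by omega
            rw [hie, fa_snoc (by omega), fa_append_left hj'] at he
            exact ha (he ▸ fa_infix w j (m + 1))
        · have hi' : i + (m + 1) ≤ w.length := by omega
          by_cases hje : j = w.length - m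
          · exfalso
            have := he.symm
            rw [hje, fa_snoc (by omega), fa_append_left hi'] at this
            exact ha (this ▸ fa_infix w i (m + 1))
          · have hj' : j + (m + 1) ≤ w.length := by omega
            rw [fa_append_left hi', fa_append_left hj'] at he
            exact hd i j hi' hj' he
      obtain ⟨w', hp, h1, h2, h3⟩ := ih (w ++ [a]) (by simp; omega) hd2 (by simp; omega)
      exact ⟨w', (prefix_append w [a]).trans hp, h1, h2, h3⟩

lemma take_cycle (c : List A) {m : ℕ} (hm : m ≤ c.length) :
    (c ++ c).take (c.length + m) = c ++ c.take m := by
  rw [take_append, take_of_length_le (by omega)]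
  congr 2
  omega

lemma factor_cycle_iff {c : List A} {m : ℕ} (hm : m + 1 ≤ c.length) :
    ∀ x : List A, x.length ≤ m + 1 → (x <:+: c ++ c.take m ↔ x <:+: c ++ c) := by
  intro x hx
  constructor
  · intro h
    refine h.trans ?_
    rw [← take_cycle c (by omega)]
    exact (take_prefix _ _).isInfix
  · intro h
    obtain ⟨p, hp, he⟩ := infix_pos h
    simp only [length_append] at hp
    by_cases hcase : p + x.length ≤ c.length + m
    · have : fa ((c ++ c).take (c.length + m)) p x.length = fa (c ++ c) p x.length :=
        fa_take hcase
      rw [take_cycle c (by omega)] at this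
      rw [he, ← this]
      exact fa_infix _ _ _
    · have hpL : c.length ≤ p := by omega
      have : fa (c ++ c) p x.length = fa c (p - c.length) x.length := by
        have hdd : drop p (c ++ c) = drop (p - c.length) (drop c.length (c ++ c)) := by
          rw [drop_drop]
          congr 1
          omega
        rw [fa, fa, hdd, drop_left]
      rw [he, this]
      exact (fa_infix _ _ _).trans ((prefix_append c (c.take m)).isInfix)

lemma rot_sq_eq (c : List A) {i : ℕ} (hi : i ≤ c.length) :
    c ++ c ++ c = c.take i ++ (c.rotate i ++ c.rotate i) ++ c.drop i := by
  rw [rotate_eq_drop_append_take hi]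
  have key : ∀ X : List A, c.take i ++ (c.drop i ++ X) = c ++ X := by
    intro X
    rw [← append_assoc, take_append_drop]
  simp only [append_assoc]
  rw [take_append_drop, key, key]

lemma rot_factor {c : List A} {i : ℕ} (hi : i ≤ c.length) :
    ∀ x : List A, x.length ≤ c.length →
      x <:+: (c.rotate i ++ c.rotate i) → x <:+: c ++ c := by
  intro x hx h
  have h3 : x <:+: c ++ c ++ c := h.trans ⟨c.take i, c.drop i, (rot_sq_eq c hi).symm⟩
  obtain ⟨p, hp, he⟩ := infix_pos h3
  simp only [length_append] at hp
  by_cases hcase : p + x.length ≤ c.length + c.length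
  · have : fa ((c ++ c ++ c).take (c.length + c.length)) p x.length =
        fa (c ++ c ++ c) p x.length := fa_take hcase
    have h2 : (c ++ c ++ c).take (c.length + c.length) = c ++ c := by
      rw [take_append, take_of_length_le (by simp)]
      simp
    rw [h2] at this
    rw [he, ← this]
    exact fa_infix _ _ _
  · have hpL : c.length ≤ p := by omega
    have hdl : (c ++ c ++ c).drop c.length = c ++ c := by
      rw [append_assoc]
      exact drop_left
    have : fa (c ++ c ++ c) p x.length = fa (c ++ c) (p - c.length) x.length := by
      have hdd : drop p (c ++ c ++ c) = drop (p - c.length) (drop c.length (c ++ c ++ c)) := by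
        rw [drop_drop]
        congr 1
        omega
      rw [fa, fa, hdd, hdl]
    rw [he, this]
    exact fa_infix _ _ _

lemma rot_factors {c : List A} {i m : ℕ} (hm : m + 1 ≤ c.length) (hi : i ≤ c.length) :
    ∀ x : List A, x.length ≤ m + 1 →
      (x <:+: (c.rotate i ++ (c.rotate i).take m) ↔ x <:+: (c ++ c.take m)) := by
  intro x hx
  have hlr : (c.rotate i).length = c.length := length_rotate c i
  have hrr : (c.rotate i).rotate (c.length - i) = c := by
    rw [rotate_rotate]
    have : i + (c.length - i) = c.length := by omega
    rw [this, rotate_length]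
  constructor
  · intro h
    rw [factor_cycle_iff (by omega) x hx] at h
    have := rot_factor hi x (by omega) h
    rw [← factor_cycle_iff hm x hx] at this
    exact this
  · intro h
    rw [factor_cycle_iff hm x hx] at h
    have h2 : x <:+: (c.rotate i).rotate (c.length - i) ++ (c.rotate i).rotate (c.length - i) := by
      rwa [hrr]
    have := rot_factor (c := c.rotate i) (i := c.length - i) (by omega) x (by omega) h2
    rw [← factor_cycle_iff (c := c.rotate i) (by omega) x hx] at this
    exact this

/-- `c` is a closed covering trail for order `m`: reading the cyclic word `c`
(linearized as `c ++ c.take m`), every word of length `m` occurs and all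
factors of length `m+1` are distinct. -/
def CCT (m : ℕ) (c : List A) : Prop :=
  m + 1 ≤ c.length ∧ Cov m (c ++ c.take m) ∧ Dist (m + 1) (c ++ c.take m)

lemma wc_length {c : List A} {m : ℕ} (h : m ≤ c.length) :
    (c ++ c.take m).length = c.length + m := by
  simp [length_take]; omega

lemma CCT.len_le {c : List A} {m : ℕ} (hc : CCT m c) :
    c.length ≤ Fintype.card A ^ (m + 1) := by
  obtain ⟨h1, -, h3⟩ := hc
  have hw : (c ++ c.take m).length = c.length + m := wc_length (by omega)
  have := length_bound h3 (by omega)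
  omega

lemma fa_head {c : List A} {m : ℕ} (h : m ≤ c.length) :
    fa (c ++ c.take m) 0 m = c.take m := by
  rw [fa_zero, take_append]
  have : m - c.length = 0 := by omega
  simp [this]

lemma fa_last {c : List A} {m : ℕ} (h : m ≤ c.length) :
    fa (c ++ c.take m) c.length m = c.take m := by
  rw [fa, drop_left, take_of_length_le]
  simp [length_take]

lemma covprefix {c : List A} {m : ℕ} (hc : CCT m c) {E : ℕ}
    (h1 : c.length - 1 ≤ E) (h2 : E ≤ c.length) :
    Cov m ((c ++ c.take m).take (m + E)) := by
  obtain ⟨hm1, hcov, -⟩ := hc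
  have hwl : (c ++ c.take m).length = c.length + m := wc_length (by omega)
  intro u hu
  obtain ⟨p, hp, he⟩ := infix_pos (hcov u hu)
  rw [hu] at hp he
  rw [hwl] at hp
  by_cases hpE : p ≤ E
  · rw [he, ← fa_take (show p + m ≤ m + E by omega)]
    exact fa_infix _ _ _
  · have hpL : p = c.length := by omega
    have : u = fa (c ++ c.take m) 0 m := by
      rw [fa_head (by omega), ← fa_last (show m ≤ c.length by omega), ← hpL, ← he]
    rw [this, ← fa_take (show 0 + m ≤ m + E by omega)]
    exact fa_infix _ _ _

lemma step {m : ℕ} {c : List A} (hc : CCT m c)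
    (hlt : c.length < Fintype.card A ^ (m + 1)) :
    ∃ c' : List A, CCT m c' ∧ c.length < c'.length ∧
      (∀ E, c.length ≤ E → E ≤ c'.length →
        ∃ w : List A, w.length = m + E ∧ Cov m w ∧ Dist (m + 1) w) := by
  obtain ⟨hm1, hcov, hdist⟩ := hc
  set L := c.length with hL
  have hwl : (c ++ c.take m).length = L + m := wc_length (by omega)
  -- a missing word of length m+1
  have hcard : (Sfin (c ++ c.take m) (m + 1)).card = L := by
    rw [card_Sfin_of_dist hdist (by omega), hwl]
    omega
  have hmiss : ∃ z ∈ allW A (m + 1), z ∉ Sfin (c ++ c.take m) (m + 1) := by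
    by_contra hcon
    push_neg at hcon
    have : allW A (m + 1) ⊆ Sfin (c ++ c.take m) (m + 1) := fun z hz => hcon z hz
    have := Finset.card_le_card this
    rw [hcard, card_allW] at this
    omega
  obtain ⟨z, hzmem, hznot⟩ := hmiss
  have hzlen : z.length = m + 1 := mem_allW.1 hzmem
  have hznf : ¬ z <:+: (c ++ c.take m) := fun h => hznot (mem_Sfin.2 ⟨hzlen, h⟩)
  have hzne : z ≠ [] := by intro h; rw [h] at hzlen; simp at hzlen
  set u := z.dropLast with hu
  set a := z.getLast hzne with ha
  have hz_eq : u ++ [a] = z := dropLast_append_getLast hzne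
  have hulen : u.length = m := by
    simp [hu, hzlen]
  -- position of u in the cyclic word
  obtain ⟨p, hp, hpe⟩ := infix_pos (hcov u hulen)
  rw [hulen] at hp hpe
  rw [hwl] at hp
  set i := if p = L then 0 else p with hi
  have hiL : i ≤ L := by
    rw [hi]; split <;> omega
  have hu_i : u = fa (c ++ c.take m) i m := by
    rw [hi]; split
    · rename_i hpL
      rw [fa_head (by omega), ← fa_last (show m ≤ c.length by omega), ← hL, ← hpL]
      exact hpe
    · exact hpe
  -- the rotated cyclic word
  set c' := c.rotate i with hc'
  have hlc' : c'.length = L := length_rotate c i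
  have hFS : ∀ x : List A, x.length ≤ m + 1 →
      (x <:+: (c' ++ c'.take m) ↔ x <:+: (c ++ c.take m)) :=
    rot_factors hm1 hiL
  -- u is the prefix (and the "end vertex") of the rotation
  have hu_c' : u = c'.take m := by
    have h1 : fa (c ++ c.take m) i m = fa (c ++ c) i m := by
      rw [← take_cycle c (show m ≤ c.length by omega)]
      exact fa_take (by omega)
    have h2 : (c ++ c).drop i = c.drop i ++ c := by
      rw [drop_append]
      have : i - c.length = 0 := by omega
      rw [this, drop_zero]
    have h3 : c'.take m = (c.drop i ++ c.take i).take m := by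
      rw [hc', rotate_eq_drop_append_take hiL]
    rw [hu_i, h1, fa, h2, h3, take_append, take_append]
    congr 1
    rw [take_take]
    congr 1
    simp only [length_drop]
    omega
  have hwrotl : (c' ++ c'.take m).length = L + m := by
    rw [wc_length (by omega), hlc']
  have hcov' : Cov m (c' ++ c'.take m) := by
    intro x hx
    exact (hFS x (by omega)).2 (hcov x hx)
  have hdist' : Dist (m + 1) (c' ++ c'.take m) := by
    have hSeq : Sfin (c' ++ c'.take m) (m + 1) = Sfin (c ++ c.take m) (m + 1) := by
      apply Finset.ext
      intro x
      rw [mem_Sfin, mem_Sfin]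
      constructor
      · rintro ⟨h1, h2⟩
        exact ⟨h1, (hFS x (le_of_eq h1)).1 h2⟩
      · rintro ⟨h1, h2⟩
        exact ⟨h1, (hFS x (le_of_eq h1)).2 h2⟩
    have hS' : Sfin (c' ++ c'.take m) (m + 1) =
        (Finset.range L).image (fun q => fa (c' ++ c'.take m) q (m + 1)) := by
      rw [Sfin, hwrotl]
      congr 2
      omega
    have hcard' : ((Finset.range L).image
        (fun q => fa (c' ++ c'.take m) q (m + 1))).card = (Finset.range L).card := by
      rw [← hS', hSeq, hcard, Finset.card_range]
    have hinj := Finset.card_image_iff.1 hcard'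
    intro q r hq hr he
    rw [hwrotl] at hq hr
    have hqm : q ∈ (↑(Finset.range L) : Set ℕ) := by simp; omega
    have hrm : r ∈ (↑(Finset.range L) : Set ℕ) := by simp; omega
    exact hinj hqm hrm he
  -- the end of the rotated word is u, and u ++ [a] is not a factor
  have hend : fa (c' ++ c'.take m) ((c' ++ c'.take m).length - m) m = u := by
    rw [hwrotl]
    have : L + m - m = L := by omega
    rw [this, ← hlc', fa_last (by omega), ← hu_c']
  have hznf' : ¬ z <:+: (c' ++ c'.take m) := fun h => hznf ((hFS z (le_of_eq hzlen)).1 h)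
  -- extend maximally
  obtain ⟨w', hpref, hm', hdist'', hstuck⟩ :=
    ext_stuck m (Fintype.card A ^ (m + 1)) (c' ++ c'.take m) (by omega) hdist' (by omega)
  have hwl' : L + m ≤ w'.length := by
    have := hpref.length_le
    omega
  have hstrict : L + m < w'.length := by
    rcases Nat.lt_or_ge (L + m) w'.length with h | h
    · exact h
    · exfalso
      have heq : c' ++ c'.take m = w' := hpref.eq_of_length (by omega)
      have := hstuck a
      rw [← heq, hend, hz_eq] at this
      exact hznf' this
  -- w' is closed: its first m letters equal its last m letters
  have hclosed := stuck_closed hm' hdist'' hstuck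
  set L'' := w'.length - m with hL''
  set c'' := w'.take L'' with hc''
  have hlc'' : c''.length = L'' := by
    rw [hc'', length_take]
    omega
  have hdrop : w'.drop L'' = w'.take m := by
    have h1 : fa w' L'' m = w'.drop L'' := by
      rw [fa, take_of_length_le]
      rw [length_drop]
      omega
    rw [← h1, ← hclosed]
  have hw'_eq : w' = c'' ++ c''.take m := by
    have h1 : c''.take m = w'.take m := by
      rw [hc'', take_take]
      congr 1
      omega
    rw [h1, ← hdrop, hc'']
    exact (take_append_drop L'' w').symm
  have hcovw' : Cov m w' := (hcov'.of_infix hpref.isInfix)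
  have hcct'' : CCT m c'' := by
    refine ⟨by omega, ?_, ?_⟩
    · rw [← hw'_eq]; exact hcovw'
    · rw [← hw'_eq]; exact hdist''
  refine ⟨c'', hcct'', by omega, ?_⟩
  intro E hE1 hE2
  refine ⟨w'.take (m + E), ?_, ?_, hdist''.take _⟩
  · rw [length_take]
    rw [hlc''] at hE2
    omega
  · have hpre2 : (c' ++ c'.take m) <+: w'.take (m + E) := by
      rw [prefix_take_iff]
      exact ⟨hpref, by omega⟩
    exact hcov'.of_infix hpre2.isInfix

lemma base_words {m : ℕ} {c : List A} (hc : CCT m c) :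
    ∀ E, c.length - 1 ≤ E → E ≤ c.length →
      ∃ w : List A, w.length = m + E ∧ Cov m w ∧ Dist (m + 1) w := by
  intro E h1 h2
  have hm1 := hc.1
  have hwl : (c ++ c.take m).length = c.length + m := wc_length (by omega)
  refine ⟨(c ++ c.take m).take (m + E), ?_, covprefix hc h1 h2, hc.2.2.take _⟩
  rw [length_take]
  omega

lemma outer (m : ℕ) : ∀ (d : ℕ) (c : List A), CCT m c →
    Fintype.card A ^ (m + 1) ≤ c.length + d →
    (∃ cs : List A, cs.length = Fintype.card A ^ (m + 1) ∧ CCT m cs) ∧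
    (∀ E, c.length - 1 ≤ E → E ≤ Fintype.card A ^ (m + 1) →
      ∃ w : List A, w.length = m + E ∧ Cov m w ∧ Dist (m + 1) w) := by
  intro d
  induction d with
  | zero =>
    intro c hc hd
    have hle := hc.len_le
    have heq : c.length = Fintype.card A ^ (m + 1) := by omega
    refine ⟨⟨c, heq, hc⟩, ?_⟩
    intro E h1 h2
    exact base_words hc E h1 (by omega)
  | succ d ih =>
    intro c hc hd
    by_cases hL : Fintype.card A ^ (m + 1) ≤ c.length
    · have hle := hc.len_le
      have heq : c.length = Fintype.card A ^ (m + 1) := by omega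
      refine ⟨⟨c, heq, hc⟩, ?_⟩
      intro E h1 h2
      exact base_words hc E h1 (by omega)
    · obtain ⟨c', hc', hlt, hwords⟩ := step hc (by omega)
      obtain ⟨hstar, hwords'⟩ := ih c' hc' (by omega)
      refine ⟨hstar, ?_⟩
      intro E h1 h2
      by_cases hE1 : E ≤ c.length
      · exact base_words hc E h1 hE1
      · by_cases hE2 : E ≤ c'.length
        · exact hwords E (by omega) hE2
        · exact hwords' E (by omega) h2

lemma exists_cct (hk2 : 2 ≤ Fintype.card A) :
    ∀ m : ℕ, ∃ c : List A, c.length = Fintype.card A ^ m ∧ CCT m c := by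
  intro m
  induction m with
  | zero =>
    have : Nonempty A := Fintype.card_pos_iff.1 (by omega)
    obtain ⟨a⟩ := this
    refine ⟨[a], by simp, ?_, ?_, ?_⟩
    · simp
    · intro u hu
      rw [length_eq_zero_iff] at hu
      subst hu
      exact nil_infix
    · intro i j hi hj he
      simp at hi hj
      omega
  | succ m ih =>
    obtain ⟨c, hclen, hcct⟩ := ih
    obtain ⟨⟨cs, hcs, hcct'⟩, -⟩ := outer m (Fintype.card A ^ (m + 1)) c hcct (by omega)
    obtain ⟨hm1, hcov, hdist⟩ := hcct'
    have hwl : (cs ++ cs.take m).length = cs.length + m := wc_length (by omega)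
    have hcovfull : ∀ u : List A, u.length = m + 1 → u <:+: (cs ++ cs.take m) :=
      all_factors_of_maxlen hdist (by omega) (by omega)
    -- show CCT (m+1) cs
    have hm2 : m + 2 ≤ Fintype.card A ^ (m + 1) := by
      have h1 : m + 1 < 2 ^ (m + 1) := Nat.lt_two_pow_self
      have h2 : 2 ^ (m + 1) ≤ Fintype.card A ^ (m + 1) := Nat.pow_le_pow_left hk2 _
      omega
    -- cs ++ cs.take m is a prefix of cs ++ cs.take (m+1)
    have hpre : (cs ++ cs.take m) <+: (cs ++ cs.take (m + 1)) := by
      have h1 : cs.take (m + 1) = cs.take m ++ (cs.take (m + 1)).drop m := by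
        nth_rewrite 1 [← take_append_drop m (cs.take (m + 1))]
        rw [take_take]
        congr 2
        omega
      rw [h1, ← append_assoc]
      exact prefix_append _ _
    have hwl2 : (cs ++ cs.take (m + 1)).length = cs.length + (m + 1) := by
      simp [length_take]
      omega
    refine ⟨cs, hcs, by omega, ?_, ?_⟩
    · intro u hu
      exact (hcovfull u hu).trans hpre.isInfix
    · -- Dist (m+2) (cs ++ cs.take (m+1))
      intro i j hi hj he
      rw [hwl2] at hi hj
      have htk : (cs ++ cs.take (m + 1)).take (cs.length + m) = cs ++ cs.take m := by
        have := prefix_iff_eq_take.1 hpre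
        rw [this, hwl]
      have hfa : ∀ q, q + (m + 1) ≤ cs.length + m →
          fa (cs ++ cs.take (m + 1)) q (m + 1) = fa (cs ++ cs.take m) q (m + 1) := by
        intro q hq
        rw [← htk, fa_take hq]
      have he1 : fa (cs ++ cs.take (m + 1)) i (m + 1) = fa (cs ++ cs.take (m + 1)) j (m + 1) := by
        rw [← fa_fa_left i (show m + 1 ≤ m + 2 by omega),
          ← fa_fa_left j (show m + 1 ≤ m + 2 by omega), he]
      rw [hfa i (by omega), hfa j (by omega)] at he1
      exact hdist i j (by omega) (by omega) he1

lemma complexity_eq_card (w : List A) (n : ℕ) : complexity w n = (Sfin w n).card := by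
  have : {u : List A | u.length = n ∧ u <:+: w} = ↑(Sfin w n) := by
    ext u
    simp only [Set.mem_setOf_eq, Finset.coe_sort_coe, Finset.mem_coe, mem_Sfin]
  rw [complexity, this, Set.ncard_coe_finset]

lemma compl_cov {w : List A} {m n : ℕ} (hpos : 0 < Fintype.card A)
    (hcov : Cov m w) (hn : n ≤ m) :
    complexity w n = Fintype.card A ^ n := by
  obtain ⟨a⟩ : Nonempty A := Fintype.card_pos_iff.1 hpos
  have : Sfin w n = allW A n := by
    apply Finset.eq_of_subset_of_card_le (Sfin_subset_allW w n)
    apply Finset.card_le_card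
    intro u hu
    rw [mem_allW] at hu
    have hpad : (u ++ replicate (m - n) a).length = m := by
      simp [hu]; omega
    have hinf : u <:+: w := (prefix_append u (replicate (m - n) a)).isInfix.trans
      (hcov _ hpad)
    exact mem_Sfin.2 ⟨hu, hinf⟩
  rw [complexity_eq_card, this, card_allW]

lemma compl_dist {w : List A} {n : ℕ} (hd : Dist n w) (hn : n ≤ w.length) :
    complexity w n = w.length + 1 - n := by
  rw [complexity_eq_card, card_Sfin_of_dist hd hn]
end DeBruijnAux

open DeBruijnAux in
/-- For every `N > 0` and every alphabet with `k ≥ 1` letters, there exists a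
de Bruijn word of length `N`: a word `w` with `p_w(n) = min (k^n) (N - n + 1)`
for all `1 ≤ n ≤ N`. -/
theorem exists_deBruijn_word {A : Type*} [Fintype A] (k N : ℕ)
    (hk : Fintype.card A = k) (hk1 : 1 ≤ k) (hN : 0 < N) :
    ∃ w : List A, w.length = N ∧
      ∀ n, 1 ≤ n → n ≤ N → complexity w n = min (k ^ n) (N - n + 1) := by
  classical
  subst hk
  rcases Nat.lt_or_ge (Fintype.card A) 2 with hk2 | hk2
  · -- one-letter alphabet
    have hcard1 : Fintype.card A = 1 := by omega
    obtain ⟨a⟩ : Nonempty A := Fintype.card_pos_iff.1 (by omega)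
    have hsub : ∀ x y : A, x = y := Fintype.card_le_one_iff.1 (by omega)
    refine ⟨List.replicate N a, List.length_replicate, ?_⟩
    have hcov : Cov N (List.replicate N a) := by
      intro u hu
      have : u = List.replicate N a := List.eq_replicate_iff.2 ⟨hu, fun b _ => hsub b a⟩
      rw [this]
    intro n hn1 hn2
    rw [compl_cov (by omega) hcov hn2, hcard1, one_pow]
    omega
  · -- at least two letters
    set P : ℕ → Prop := fun m => Fintype.card A ^ m + m ≤ N + 1 with hP_def
    have hPdec : DecidablePred P := fun m => by rw [hP_def]; infer_instance
    set m := Nat.findGreatest P N with hm_def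
    have hP : Fintype.card A ^ m + m ≤ N + 1 := by
      have : P m := Nat.findGreatest_spec (Nat.zero_le N) (by simp [hP_def])
      exact this
    have hmN : m ≤ N := Nat.findGreatest_le N
    have hnot : ¬ (Fintype.card A ^ (m + 1) + (m + 1) ≤ N + 1) := by
      by_cases hc : m + 1 ≤ N
      · have := Nat.findGreatest_is_greatest (P := P) (show m < m + 1 by omega) hc
        exact this
      · intro hcon
        have hm_eq : m = N := by omega
        have hpow : 1 ≤ Fintype.card A ^ (m + 1) := Nat.one_le_pow _ _ (by omega)
        rw [hm_eq] at hcon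
        have h2 : 2 ^ (N + 1) ≤ Fintype.card A ^ (N + 1) := Nat.pow_le_pow_left hk2 _
        have h3 : N + 1 < 2 ^ (N + 1) := Nat.lt_two_pow_self
        omega
    obtain ⟨c0, hc0len, hc0⟩ := exists_cct hk2 m
    obtain ⟨-, hwords⟩ := outer m (Fintype.card A ^ (m + 1)) c0 hc0 (by omega)
    obtain ⟨w, hwlen, hcovw, hdistw⟩ := hwords (N - m) (by omega) (by omega)
    have hwN : w.length = N := by omega
    refine ⟨w, hwN, ?_⟩
    intro n hn1 hn2
    by_cases hnm : n ≤ m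
    · rw [compl_cov (by omega) hcovw hnm]
      have hpow : Fintype.card A ^ n + n ≤ Fintype.card A ^ m + m :=
        add_le_add (Nat.pow_le_pow_right (by omega) hnm) hnm
      omega
    · have hmn : m + 1 ≤ n := by omega
      have hdn : Dist n w := hdistw.mono hmn
      rw [compl_dist hdn (by omega)]
      have hpow : Fintype.card A ^ (m + 1) ≤ Fintype.card A ^ n :=
        Nat.pow_le_pow_right (by omega) hmn
      omega
end

section
/- For every n > 0 and k ≥ 1 there exists a word w of length N = k^n + n − 1 over an alphabet A_k with k letters that contains every one of the k^n words of length n over A_k as a subword, each occurring exactly once; consequently p_w(n) = k^n. -/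
namespace DBAux
variable {A : Type*}

def win (w : List A) (i ℓ : ℕ) : List A := (w.drop i).take ℓ

def Dist (n : ℕ) (w : List A) : Prop :=
  ∀ i j, i + n ≤ w.length → j + n ≤ w.length → win w i n = win w j n → i = j

lemma win_length {w : List A} {i ℓ : ℕ} (h : i + ℓ ≤ w.length) : (win w i ℓ).length = ℓ := by
  simp [win]; omega

lemma win_getElem {w : List A} {i ℓ r : ℕ} (h : i + ℓ ≤ w.length) (hr : r < ℓ) :
    (win w i ℓ)[r]'(by rw [win_length h]; exact hr) = w[i + r]'(by omega) := by
  simp [win, List.getElem_take, List.getElem_drop]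

lemma getElem_congr' {w : List A} {x y : ℕ} (h : x = y) (hx : x < w.length) :
    w[x]'hx = w[y]'(h ▸ hx) := by subst h; rfl

lemma win_eq_of_getElem {w w' : List A} {i i' ℓ : ℕ} (h : i + ℓ ≤ w.length)
    (h' : i' + ℓ ≤ w'.length)
    (he : ∀ r : ℕ, (hr : r < ℓ) → w[i + r]'(by omega) = w'[i' + r]'(by omega)) :
    win w i ℓ = win w' i' ℓ := by
  apply List.ext_getElem (by rw [win_length h, win_length h'])
  intro r hr _
  rw [win_length h] at hr
  rw [win_getElem h hr, win_getElem h' hr]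
  exact he r hr

lemma infix_iff_win {u w : List A} :
    u <:+: w ↔ ∃ i, i + u.length ≤ w.length ∧ win w i u.length = u := by
  constructor
  · rintro ⟨s, t, rfl⟩
    refine ⟨s.length, by simp, ?_⟩
    simp [win, List.drop_append, List.take_append]
  · rintro ⟨i, hi, hwin⟩
    exact hwin ▸ (((w.drop i).take_prefix u.length).isInfix.trans
      (w.drop_suffix i).isInfix)

lemma win_append_of_le {w : List A} {j n : ℕ} (h : j + n ≤ w.length) (a : A) :
    win (w ++ [a]) j n = win w j n := by
  apply win_eq_of_getElem (by simp; omega) h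
  intro r hr
  rw [List.getElem_append_left (by omega)]

lemma win_append_last {w : List A} {m : ℕ} (h : m ≤ w.length) (a : A) :
    win (w ++ [a]) (w.length - m) (m + 1) = w.drop (w.length - m) ++ [a] := by
  have hd : (w ++ [a]).drop (w.length - m) = w.drop (w.length - m) ++ [a] := by
    rw [List.drop_append]
    have h0 : w.length - m - w.length = 0 := by omega
    rw [h0, List.drop_zero]
  rw [win, hd]
  apply List.take_of_length_le
  simp; omega

lemma dist_append {n m : ℕ} (hnm : n = m + 1) {w : List A} (hw : Dist n w)
    (hm : m ≤ w.length) (a : A)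
    (ha : ∀ i, i + n ≤ w.length → win w i n ≠ w.drop (w.length - m) ++ [a]) :
    Dist n (w ++ [a]) := by
  subst hnm
  intro i j hi hj hij
  simp only [List.length_append, List.length_singleton] at hi hj
  rcases Nat.lt_or_ge (i + (m + 1)) (w.length + 1) with hi' | hi' <;>
    rcases Nat.lt_or_ge (j + (m + 1)) (w.length + 1) with hj' | hj'
  · exact hw i j (by omega) (by omega) (by rwa [win_append_of_le (by omega),
      win_append_of_le (by omega)] at hij)
  · exfalso
    rw [show j = w.length - m by omega, win_append_last hm,
      win_append_of_le (show i + (m+1) ≤ w.length by omega)] at hij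
    exact ha i (by omega) hij
  · exfalso
    rw [show i = w.length - m by omega, win_append_last hm,
      win_append_of_le (show j + (m+1) ≤ w.length by omega)] at hij
    exact ha j (by omega) hij.symm
  · omega

lemma length_le {n m k : ℕ} [Fintype A] (hnm : n = m + 1) (hk : Fintype.card A = k)
    {w : List A} (hw : Dist n w) : w.length ≤ k ^ n + n - 1 := by
  rcases Nat.lt_or_ge w.length n with h | h
  · have : 1 ≤ k ^ n ∨ 0 ≤ k ^ n := Or.inr (Nat.zero_le _)
    omega
  · set e : Fin (w.length - m) → (Fin n → A) :=
      fun i r => w[(i : ℕ) + (r : ℕ)]'(by have := i.isLt; have := r.isLt; omega) with he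
    have hinj : Function.Injective e := by
      intro i j hij
      apply Fin.ext
      refine hw i j (by have := i.isLt; omega) (by have := j.isLt; omega) ?_
      refine win_eq_of_getElem (by have := i.isLt; omega) (by have := j.isLt; omega)
        (fun r hr => ?_)
      have := congrFun hij ⟨r, hr⟩
      simpa [he] using this
    have hcard := Fintype.card_le_of_injective e hinj
    simp [hk] at hcard
    omega

end DBAux

open DBAux

/-- The number of occurrences of `u` in `w`: the number of starting positions
`i` at which the contiguous block of `w` of length `|u|` equals `u`. -/
noncomputable def occCount {A : Type*} (w u : List A) : ℕ :=
  Set.ncard {i : ℕ | i + u.length ≤ w.length ∧ (w.drop i).take u.length = u}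

/-- For every `n > 0` and alphabet with `k ≥ 1` letters, there is a word of
length `k^n + n - 1` containing each of the `k^n` words of length `n` as a
subword exactly once; consequently its complexity at `n` is `k^n`. -/
theorem exists_word_all_factors_once {A : Type*} [Fintype A] (k n : ℕ)
    (hk : Fintype.card A = k) (hk1 : 1 ≤ k) (hn : 0 < n) :
    ∃ w : List A, w.length = k ^ n + n - 1 ∧
      (∀ u : List A, u.length = n → occCount w u = 1) ∧
      complexity w n = k ^ n := by
  obtain ⟨m, hnm⟩ : ∃ m, n = m + 1 := ⟨n - 1, by omega⟩
  have hA : Nonempty A := Fintype.card_pos_iff.mp (by omega)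
  obtain ⟨a₀⟩ := hA
  -- a maximal word with all length-n windows distinct
  have hSn : (n : ℕ) ∈ {ℓ : ℕ | ∃ w : List A, w.length = ℓ ∧ Dist n w} := by
    refine ⟨List.replicate n a₀, by simp, fun i j hi hj _ => ?_⟩
    simp at hi hj; omega
  have hSbdd : BddAbove {ℓ : ℕ | ∃ w : List A, w.length = ℓ ∧ Dist n w} := by
    refine ⟨k ^ n + n - 1, fun ℓ hℓ => ?_⟩
    obtain ⟨w, rfl, hw⟩ := hℓ
    exact length_le hnm hk hw
  obtain ⟨w, hwlen, hw⟩ := Nat.sSup_mem ⟨n, hSn⟩ hSbdd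
  have hmax : ∀ w' : List A, Dist n w' → w'.length ≤ w.length := by
    intro w' h
    rw [hwlen]
    exact le_csSup hSbdd ⟨w', rfl, h⟩
  have hn_le : n ≤ w.length := hwlen ▸ le_csSup hSbdd hSn
  set L : ℕ := w.length - m with hL
  have hLpos : 0 < L := by omega
  have hLm : w.length = L + m := by omega
  -- Step 1: every s·a occurs, where s is the length-m suffix of w
  have hstep1 : ∀ a : A, ∃ i, i + n ≤ w.length ∧ win w i n = w.drop L ++ [a] := by
    intro a
    by_contra hcon
    push_neg at hcon
    have hd : Dist n (w ++ [a]) := dist_append hnm hw (by omega) a (by rw [← hL]; exact hcon)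
    have := hmax (w ++ [a]) hd
    simp at this
  -- Step 2: the length-m prefix equals the length-m suffix
  have hst : w.take m = w.drop L := by
    by_contra h0
    have hwin0 : win w 0 m = w.take m := by simp [win]
    choose ia hia1 hia2 using hstep1
    set F : Option A → ℕ := fun o => o.elim L ia with hF
    have hsl : (w.drop L).length = m := by simp; omega
    have hFwin : ∀ o, F o + m ≤ w.length ∧ win w (F o) m = w.drop L := by
      rintro (_ | a)
      · refine ⟨by have h2 : F none = L := rfl; omega, ?_⟩
        show (w.drop L).take m = w.drop L
        exact List.take_of_length_le (by omega)
      · refine ⟨by have h2 : F (some a) = ia a := rfl; have := hia1 a; omega, ?_⟩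
        have h1 : win w (ia a) m = (win w (ia a) n).take m := by
          show (w.drop (ia a)).take m = ((w.drop (ia a)).take n).take m
          rw [List.take_take]
          congr 1
          omega
        show win w (F (some a)) m = w.drop L
        have h2 : F (some a) = ia a := rfl
        rw [h2, h1, hia2 a, ← hsl, List.take_left]
    have hFpos : ∀ o, 1 ≤ F o := by
      intro o
      by_contra h1
      have h2 : F o = 0 := by omega
      have h3 := (hFwin o).2
      rw [h2] at h3
      exact h0 (hwin0.symm.trans h3)
    have hFlt : ∀ a : A, ia a < L := by
      intro a
      have := hia1 a
      omega
    set G : Option A → A :=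
      fun o => w[F o - 1]'(by have := (hFwin o).1; have := hFpos o; omega) with hG
    have hGwin : ∀ o, win w (F o - 1) n = G o :: w.drop L := by
      intro o
      have h1 := (hFwin o).1
      have h2 := hFpos o
      have hlt : F o - 1 < w.length := by omega
      rw [hnm]
      show (w.drop (F o - 1)).take (m + 1) = _
      rw [List.drop_eq_getElem_cons hlt, List.take_succ_cons]
      congr 1
      have h3 : F o - 1 + 1 = F o := by omega
      rw [h3]
      exact (hFwin o).2
    have hGinj : Function.Injective G := by
      intro o₁ o₂ hGeq
      have h1 := (hFwin o₁).1
      have h2 := (hFwin o₂).1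
      have h3 := hFpos o₁
      have h4 := hFpos o₂
      have heq : win w (F o₁ - 1) n = win w (F o₂ - 1) n := by
        rw [hGwin, hGwin, hGeq]
      have hFeq : F o₁ = F o₂ := by
        have := hw _ _ (by omega) (by omega) heq
        omega
      match o₁, o₂ with
      | none, none => rfl
      | none, some a =>
        exfalso
        have h5 : L = ia a := hFeq
        have := hFlt a
        omega
      | some a, none =>
        exfalso
        have h5 : ia a = L := hFeq
        have := hFlt a
        omega
      | some a₁, some a₂ =>
        have h5 : ia a₁ = ia a₂ := hFeq
        have h6 : win w (ia a₁) n = win w (ia a₂) n := by rw [h5]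
        rw [hia2, hia2] at h6
        have : a₁ = a₂ := by simpa using h6
        rw [this]
    have hcard := Fintype.card_le_of_injective G hGinj
    simp [hk] at hcard
  -- the periodic extension f of (the first L letters of) w
  have hmodlt : ∀ j : ℕ, j % L < w.length := fun j =>
    lt_of_lt_of_le (Nat.mod_lt j hLpos) (by omega)
  set f : ℕ → A := fun j => w.getD (j % L) a₀ with hf_def
  have hfval : ∀ j : ℕ, f j = w[j % L]'(hmodlt j) := fun j =>
    List.getD_eq_getElem w a₀ (hmodlt j)
  have hfcong : ∀ j j' : ℕ, j % L = j' % L → f j = f j' := by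
    intro j j' h
    simp only [hf_def, h]
  have hf : ∀ j : ℕ, (hj : j < w.length) → w[j] = f j := by
    intro j
    induction j using Nat.strong_induction_on with
    | _ j IH =>
      intro hj
      rcases Nat.lt_or_ge j L with h | h
      · rw [hfval, getElem_congr' (Nat.mod_eq_of_lt h).symm]
      · have e1 : w[j] = w[j - L]'(by omega) := by
          calc w[j] = (w.drop L)[j - L]'(by simp; omega) := by
                rw [List.getElem_drop]
                exact getElem_congr' (by omega) _
            _ = (w.take m)[j - L]'(by simp; omega) := List.getElem_of_eq hst.symm _
            _ = w[j - L]'(by omega) := List.getElem_take ..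
        rw [e1, IH (j - L) (by omega) (by omega)]
        exact hfcong _ _ (Nat.mod_eq_sub_mod h).symm
  have hshift : ∀ i r : ℕ, f (i + r) = f (i % L + r) := fun i r =>
    hfcong _ _ ((Nat.mod_modEq i L).add_right r).symm
  have hper : ∀ j : ℕ, f (j + L) = f j := fun j => hfcong _ _ (Nat.add_mod_right j L)
  -- Main rotation lemma: every occurring (n-1)-window extends by any letter
  have hmain : ∀ i, i + m ≤ w.length → ∀ a : A,
      ∃ j, j + n ≤ w.length ∧ win w j n = win w i m ++ [a] := by
    intro i him a
    by_contra hcon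
    push_neg at hcon
    set w' : List A := List.ofFn (fun r : Fin (w.length) => f (i + (r : ℕ))) with hw'
    have hw'len : w'.length = w.length := by simp [hw']
    have hw'get : ∀ j : ℕ, (hj : j < w.length) →
        w'[j]'(by rw [hw'len]; exact hj) = f (i + j) := by
      intro j hj
      simp [hw']
    have hmb : ∀ j : ℕ, (i + j) % L + n ≤ w.length := by
      intro j
      have := Nat.mod_lt (i + j) hLpos
      omega
    have hw'win : ∀ j, j + n ≤ w.length → win w' j n = win w ((i + j) % L) n := by
      intro j hj
      refine win_eq_of_getElem (by rw [hw'len]; exact hj) (hmb j) (fun r hr => ?_)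
      rw [hw'get (j + r) (by omega)]
      rw [hf ((i + j) % L + r) (by have := hmb j; omega)]
      rw [← Nat.add_assoc]
      exact hshift (i + j) r
    have hw'dist : Dist n w' := by
      intro j₁ j₂ h1 h2 heq
      rw [hw'len] at h1 h2
      rw [hw'win _ h1, hw'win _ h2] at heq
      have h3 := hw _ _ (hmb j₁) (hmb j₂) heq
      have h4 : j₁ % L = j₂ % L := Nat.ModEq.add_left_cancel' i h3
      rwa [Nat.mod_eq_of_lt (by omega), Nat.mod_eq_of_lt (by omega)] at h4
    have hsuf : w'.drop (w'.length - m) = win w i m := by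
      have h5 : w'.drop (w'.length - m) = win w' (w'.length - m) m := by
        rw [win]
        refine (List.take_of_length_le ?_).symm
        rw [List.length_drop, hw'len]
        omega
      have h6 : w'.length - m = L := by omega
      rw [h5, h6]
      refine win_eq_of_getElem (by rw [hw'len]; omega) him (fun r hr => ?_)
      rw [hw'get (L + r) (by omega)]
      rw [hf (i + r) (by omega)]
      have h7 : i + (L + r) = (i + r) + L := by omega
      rw [h7]
      exact hper (i + r)
    have hno : ∀ j, j + n ≤ w'.length → win w' j n ≠ w'.drop (w'.length - m) ++ [a] := by
      intro j hj heq
      rw [hw'len] at hj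
      rw [hw'win _ hj, hsuf] at heq
      exact hcon _ (hmb j) heq
    have hd : Dist n (w' ++ [a]) := dist_append hnm hw'dist (by rw [hw'len]; omega) a hno
    have h8 := hmax _ hd
    rw [List.length_append, List.length_singleton, hw'len] at h8
    omega
  -- every word of length n occurs
  have hreach : ∀ z : List A, z.length ≤ m →
      ∃ i, i + m ≤ w.length ∧ win w i m = (w.drop L).drop z.length ++ z := by
    intro z
    induction z using List.reverseRecOn with
    | nil =>
      intro _
      refine ⟨L, by omega, ?_⟩
      simp only [List.length_nil, List.drop_zero, List.append_nil]
      show (w.drop L).take m = w.drop L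
      exact List.take_of_length_le (by simp; omega)
    | append_singleton z a IH =>
      intro hlen
      rw [List.length_append, List.length_singleton] at hlen
      obtain ⟨i, him, hiw⟩ := IH (by omega)
      obtain ⟨j, hj, hjw⟩ := hmain i him a
      refine ⟨j + 1, by omega, ?_⟩
      have h1 : win w (j + 1) m = (win w j n).drop 1 := by
        apply List.ext_getElem
        · rw [win_length (by omega), List.length_drop, win_length hj]; omega
        · intro r hr1 hr2
          rw [win_length (by omega)] at hr1
          rw [win_getElem (by omega) hr1, List.getElem_drop,
            win_getElem hj (show 1 + r < n by omega)]
          exact getElem_congr' (by omega) _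
      rw [h1, hjw, hiw]
      have hdl : ((w.drop L).drop z.length).length = m - z.length := by simp; omega
      rw [List.append_assoc, List.drop_append, hdl,
        show 1 - (m - z.length) = 0 by omega, List.drop_zero]
      congr 1
      rw [List.drop_drop]
      congr 1
      simp
  have hall : ∀ u : List A, u.length = n → ∃ j, j + n ≤ w.length ∧ win w j n = u := by
    intro u hu
    obtain ⟨i, him, hiw⟩ := hreach (u.take m) (by rw [List.length_take]; omega)
    have htm : (u.take m).length = m := by rw [List.length_take, hu]; omega
    have hiw' : win w i m = u.take m := by
      rw [hiw, htm, List.drop_eq_nil_of_le (by simp; omega), List.nil_append]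
    obtain ⟨j, hj, hjw⟩ := hmain i him (u[m]'(by omega))
    refine ⟨j, hj, ?_⟩
    rw [hjw, hiw']
    conv_rhs => rw [← List.take_append_drop m u]
    congr 1
    rw [List.drop_eq_getElem_cons (by omega)]
    have hnil : List.drop (m + 1) u = [] := List.drop_eq_nil_of_le (by omega)
    rw [hnil]
  -- conclude
  have hLk : L = k ^ n := by
    set e : Fin L → (Fin n → A) :=
      fun i r => w[(i : ℕ) + (r : ℕ)]'(by have := i.isLt; have := r.isLt; omega) with he
    have hinj : Function.Injective e := by
      intro i j hij
      apply Fin.ext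
      refine hw i j (by have := i.isLt; omega) (by have := j.isLt; omega) ?_
      refine win_eq_of_getElem (by have := i.isLt; omega) (by have := j.isLt; omega)
        (fun r hr => ?_)
      have := congrFun hij ⟨r, hr⟩
      simpa [he] using this
    have hsurj : Function.Surjective e := by
      intro g
      obtain ⟨j, hj, hjw⟩ := hall (List.ofFn g) (by simp)
      refine ⟨⟨j, by omega⟩, ?_⟩
      funext r
      simp only [he]
      calc w[j + (r : ℕ)]'(by have := r.isLt; omega)
          = (win w j n)[(r : ℕ)]'(by rw [win_length hj]; exact r.isLt) :=
            (win_getElem hj r.isLt).symm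
        _ = (List.ofFn g)[(r : ℕ)]'(by simp) :=
            List.getElem_of_eq hjw _
        _ = g r := by simp
    have hcard := Fintype.card_congr (Equiv.ofBijective e ⟨hinj, hsurj⟩)
    simpa [hk] using hcard
  refine ⟨w, by omega, ?_, ?_⟩
  · intro u hu
    obtain ⟨j, hj, hjw⟩ := hall u hu
    have hset : {i : ℕ | i + n ≤ w.length ∧ (w.drop i).take n = u} = {j} := by
      ext i
      simp only [Set.mem_setOf_eq, Set.mem_singleton_iff, hu]
      constructor
      · rintro ⟨h1, h2⟩
        exact hw i j h1 hj (h2.trans hjw.symm)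
      · rintro rfl
        exact ⟨hj, hjw⟩
    rw [occCount, hu, hset, Set.ncard_singleton]
  · have hset : {u : List A | u.length = n ∧ u <:+: w} = {u : List A | u.length = n} := by
      ext u
      simp only [Set.mem_setOf_eq, and_iff_left_iff_imp]
      intro hu
      obtain ⟨j, hj, hjw⟩ := hall u hu
      exact infix_iff_win.mpr ⟨j, by rw [hu]; exact hj, by rw [hu]; exact hjw⟩
    rw [complexity, hset]
    have e2 : {u : List A // u.length = n} ≃ (Fin n → A) :=
      { toFun := fun u r => u.1[(r : ℕ)]'(by rw [u.2]; exact r.isLt)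
        invFun := fun g => ⟨List.ofFn g, by simp⟩
        left_inv := by
          rintro ⟨u, hu⟩
          apply Subtype.ext
          apply List.ext_getElem (by simp [hu])
          intro r h1 h2
          simp
        right_inv := by
          intro g
          funext r
          simp }
    have e3 : ↥{u : List A | u.length = n} ≃ (Fin n → A) :=
      (Equiv.subtypeEquivRight fun u => Iff.rfl).trans e2
    rw [← Nat.card_coe_set_eq, Nat.card_congr e3, Nat.card_eq_fintype_card]
    simp [hk]
end

section
/- The subword complexity sequence of a nonempty finite word w of length N over a finite alphabet is unimodal, and moreover, once it starts decreasing it decreases by exactly 1 until it reaches 1. Precisely: there exists t with 1 ≤ t ≤ N such that p_w(n) ≤ p_w(n+1) for all 1 ≤ n < t, p_w(n+1) = p_w(n) − 1 for all t ≤ n < N, and p_w(N) = 1. -/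
namespace ComplexityAux

variable {A : Type*}

/-- The set of subwords of length `n`. -/
def S (w : List A) (n : ℕ) : Set (List A) := {u | u.length = n ∧ u <:+: w}

lemma complexity_eq (w : List A) (n : ℕ) : complexity w n = (S w n).ncard := rfl

lemma S_finite (w : List A) (n : ℕ) : (S w n).Finite := by
  classical
  apply Set.Finite.subset (w.sublists.toFinset.finite_toSet)
  intro u hu
  simp only [List.coe_toFinset, Set.mem_setOf_eq, List.mem_sublists]
  exact hu.2.sublist

lemma suffix_mem (w : List A) {n : ℕ} (hn : n ≤ w.length) :
    w.drop (w.length - n) ∈ S w n := by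
  constructor
  · simp [Nat.sub_sub_self hn]
  · exact (List.drop_suffix _ _).isInfix

lemma eq_drop_of_suffix {u w : List A} (h : u <:+ w) :
    u = w.drop (w.length - u.length) := by
  obtain ⟨s, rfl⟩ := h
  simp

lemma extend_of_not_suffix {u w : List A} (h : u <:+: w) (hs : ¬ u <:+ w) :
    ∃ a, u ++ [a] <:+: w := by
  obtain ⟨s, t, rfl⟩ := h
  cases t with
  | nil => exact absurd ⟨s, by simp⟩ hs
  | cons a t' => exact ⟨a, s, t', by simp⟩

lemma S_subset (w : List A) (n : ℕ) :
    S w n ⊆ (fun u => u.take n) '' S w (n + 1) ∪ {w.drop (w.length - n)} := by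
  intro u hu
  by_cases hs : u <:+ w
  · right
    have := eq_drop_of_suffix hs
    rw [hu.1] at this
    simp [this]
  · left
    obtain ⟨a, ha⟩ := extend_of_not_suffix hu.2 hs
    refine ⟨u ++ [a], ⟨by simp [hu.1], ha⟩, List.take_left' hu.1⟩

lemma take_mem (w : List A) (n : ℕ) {v : List A} (hv : v ∈ S w (n + 1)) :
    v.take n ∈ S w n := by
  refine ⟨by simp [hv.1], ?_⟩
  exact ((List.take_prefix n v).isInfix).trans hv.2

lemma compl_le (w : List A) (n : ℕ) : complexity w n ≤ complexity w (n + 1) + 1 := by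
  have h1 : complexity w n ≤
      ((fun u => u.take n) '' S w (n + 1) ∪ {w.drop (w.length - n)}).ncard :=
    Set.ncard_le_ncard (S_subset w n)
      (((S_finite w (n + 1)).image _).union (Set.finite_singleton _))
  refine h1.trans ?_
  refine (Set.ncard_union_le _ _).trans ?_
  have h2 := Set.ncard_image_le (f := fun u => u.take n) (S_finite w (n + 1))
  have h3 : (S w (n + 1)).ncard = complexity w (n + 1) := rfl
  simp only [Set.ncard_singleton]
  omega

lemma compl_length (w : List A) : complexity w w.length = 1 := by
  have hS : S w w.length = {w} := by
    ext u
    constructor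
    · rintro ⟨hl, hi⟩
      exact hi.sublist.eq_of_length hl
    · rintro rfl
      exact ⟨rfl, List.infix_refl _⟩
  rw [complexity_eq, hS, Set.ncard_singleton]

lemma compl_gt (w : List A) {n : ℕ} (h : w.length < n) : complexity w n = 0 := by
  have hS : S w n = ∅ := by
    ext u
    simp only [S, Set.mem_setOf_eq, Set.mem_empty_iff_false, iff_false, not_and]
    intro hl hi
    have := hi.sublist.length_le
    omega
  rw [complexity_eq, hS, Set.ncard_empty]

lemma key (w : List A) {n : ℕ} (hn : n + 1 ≤ w.length)
    (hlt : complexity w (n + 1) < complexity w n) :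
    complexity w (n + 2) < complexity w (n + 1) := by
  classical
  set T : Set (List A) := (fun u => u.take n) '' S w (n + 1) with hT
  -- T ⊆ S w n
  have hTsub : T ⊆ S w n := by
    rintro _ ⟨v, hv, rfl⟩
    exact take_mem w n hv
  have hTfin : T.Finite := (S_finite w (n + 1)).image _
  have hTle : T.ncard ≤ complexity w (n + 1) := Set.ncard_image_le (S_finite w (n + 1))
  -- suffix of length n not in T
  have hsfx : w.drop (w.length - n) ∉ T := by
    intro hmem
    have hsub : S w n ⊆ T := by
      intro u hu
      rcases S_subset w n hu with h | h
      · exact h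
      · simpa [Set.mem_singleton_iff.mp h] using hmem
    have := Set.ncard_le_ncard hsub hTfin
    rw [← complexity_eq] at this
    omega
  -- card T ≥ p n - 1
  have hTge : complexity w n ≤ T.ncard + 1 := by
    have h1 : complexity w n ≤ (T ∪ {w.drop (w.length - n)}).ncard :=
      Set.ncard_le_ncard (S_subset w n) (hTfin.union (Set.finite_singleton _))
    refine h1.trans ?_
    refine (Set.ncard_union_le _ _).trans ?_
    simp
  -- take n is injective on S w (n+1)
  have hinj : Set.InjOn (fun u => u.take n) (S w (n + 1)) := by
    apply Set.injOn_of_ncard_image_eq _ (S_finite w (n + 1))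
    rw [← hT, ← complexity_eq]
    omega
  -- take (n+1) maps S w (n+2) into S w (n+1) \ {suffix}
  have hmaps : ∀ v ∈ S w (n + 2), v.take (n + 1) ∈
      S w (n + 1) \ {w.drop (w.length - (n + 1))} := by
    intro v hv
    refine ⟨take_mem w (n + 1) hv, ?_⟩
    intro hcon
    simp only [Set.mem_singleton_iff] at hcon
    -- then drop 1 v ∈ S w (n+1) and take n (drop 1 v) = suffix of length n
    apply hsfx
    refine ⟨v.drop 1, ?_, ?_⟩
    · refine ⟨by simp [hv.1], (List.drop_suffix 1 v).isInfix.trans hv.2⟩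
    · show (v.drop 1).take n = w.drop (w.length - n)
      have h1 : (v.drop 1).take n = (v.take (n + 1)).drop 1 := by
        rw [List.drop_take]
        norm_num
      rw [h1, hcon, List.drop_drop]
      congr 1
      omega
  -- take (n+1) is injective on S w (n+2)
  have hinj2 : Set.InjOn (fun v => v.take (n + 1)) (S w (n + 2)) := by
    intro v1 h1 v2 h2 heq
    simp only at heq
    have edt : ∀ v : List A, (v.drop 1).take n = (v.take (n + 1)).drop 1 := by
      intro v
      rw [List.drop_take]
      norm_num
    have hd : (v1.drop 1).take n = (v2.drop 1).take n := by
      rw [edt, edt, heq]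
    have hd1 : v1.drop 1 ∈ S w (n + 1) :=
      ⟨by simp [h1.1], (List.drop_suffix 1 v1).isInfix.trans h1.2⟩
    have hd2 : v2.drop 1 ∈ S w (n + 1) :=
      ⟨by simp [h2.1], (List.drop_suffix 1 v2).isInfix.trans h2.2⟩
    have hdd : v1.drop 1 = v2.drop 1 := hinj hd1 hd2 hd
    have ht1 : v1.take 1 = v2.take 1 := by
      have e1 : v1.take 1 = (v1.take (n + 1)).take 1 := by
        rw [List.take_take]; congr 1
      have e2 : v2.take 1 = (v2.take (n + 1)).take 1 := by
        rw [List.take_take]; congr 1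
      rw [e1, e2, heq]
    calc v1 = v1.take 1 ++ v1.drop 1 := (List.take_append_drop 1 v1).symm
      _ = v2.take 1 ++ v2.drop 1 := by rw [ht1, hdd]
      _ = v2 := List.take_append_drop 1 v2
  -- conclude
  have himg : ((fun v => v.take (n + 1)) '' S w (n + 2)).ncard = complexity w (n + 2) := by
    rw [Set.ncard_image_of_injOn hinj2, complexity_eq]
  have hsub2 : (fun v => v.take (n + 1)) '' S w (n + 2) ⊆
      S w (n + 1) \ {w.drop (w.length - (n + 1))} := by
    rintro _ ⟨v, hv, rfl⟩
    exact hmaps v hv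
  have hle2 : complexity w (n + 2) ≤ (S w (n + 1) \ {w.drop (w.length - (n + 1))}).ncard := by
    rw [← himg]
    exact Set.ncard_le_ncard hsub2 ((S_finite w (n + 1)).diff)
  have hlt2 : (S w (n + 1) \ {w.drop (w.length - (n + 1))}).ncard < (S w (n + 1)).ncard :=
    Set.ncard_diff_singleton_lt_of_mem (suffix_mem w hn) (S_finite w (n + 1))
  rw [← complexity_eq] at hlt2
  omega

end ComplexityAux

/-- The subword complexity sequence `(p_w(1), …, p_w(N))` of a nonempty finite
word `w` of length `N` is unimodal; moreover once it starts decreasing it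
decreases by exactly `1` until it reaches `1` at `n = N`. -/
theorem complexity_unimodal {A : Type*} [Fintype A] (w : List A) (hw : w ≠ [])
    (N : ℕ) (hN : w.length = N) :
    ∃ t, 1 ≤ t ∧ t ≤ N ∧
      (∀ n, 1 ≤ n → n < t → complexity w n ≤ complexity w (n + 1)) ∧
      (∀ n, t ≤ n → n < N → complexity w (n + 1) + 1 = complexity w n) ∧
      complexity w N = 1 := by
  classical
  subst hN
  have hN1 : 1 ≤ w.length := List.length_pos_iff.mpr hw
  have hlast : complexity w w.length = 1 := ComplexityAux.compl_length w
  have hex : ∃ n, 1 ≤ n ∧ complexity w (n + 1) < complexity w n := by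
    refine ⟨w.length, hN1, ?_⟩
    rw [hlast, ComplexityAux.compl_gt w (by omega)]
    omega
  set t := Nat.find hex with htdef
  have htspec := Nat.find_spec hex
  have htle : t ≤ w.length := Nat.find_min' hex ⟨hN1, by
    rw [hlast, ComplexityAux.compl_gt w (by omega)]; omega⟩
  have hdec : ∀ n, t ≤ n → n ≤ w.length → complexity w (n + 1) < complexity w n := by
    intro n
    induction n with
    | zero => intro h1 _; omega
    | succ m ih =>
      intro h1 h2
      rcases Nat.lt_or_ge t (m + 1) with h | h
      · exact ComplexityAux.key w h2 (ih (by omega) (by omega))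
      · have : t = m + 1 := by omega
        exact this ▸ htspec.2
  refine ⟨t, htspec.1, htle, ?_, ?_, hlast⟩
  · intro n hn1 hnt
    have := Nat.find_min hex hnt
    push_neg at this
    exact this hn1
  · intro n hn1 hn2
    have h1 := hdec n hn1 (by omega)
    have h2 := ComplexityAux.compl_le w n
    omega
end

section
/- Let w be a nonempty finite word of length N over a finite alphabet, let R_w be the minimal n such that every subword of w of length n has valence at most 1, and let K_w be the minimal length of a suffix of w occurring only once in w. Then the subword complexity of w takes its maximal value at R_w, and moreover p_w(R_w) = N − max{R_w, K_w} + 1. -/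
/-- The valence of a word `u` in `w`: the number of distinct letters `a`
such that `u ++ [a]` is a subword of `w`. -/
noncomputable def valence {A : Type*} (w u : List A) : ℕ :=
  Set.ncard {a : A | (u ++ [a]) <:+: w}

set_option linter.unusedVariables false
set_option linter.unusedSectionVars false

namespace CWAux

attribute [local instance] Classical.propDecidable

variable {A : Type*}

def Occ (w u : List A) : Set ℕ :=
  {i : ℕ | i + u.length ≤ w.length ∧ (w.drop i).take u.length = u}

lemma occ_finite (w u : List A) : (Occ w u).Finite :=
  (Set.finite_Iic w.length).subset fun i hi => le_trans (Nat.le_add_right _ _) hi.1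

lemma infix_iff_occ (w u : List A) : u <:+: w ↔ ∃ i, i ∈ Occ w u := by
  constructor
  · rintro ⟨s, t, rfl⟩
    refine ⟨s.length, ?_, ?_⟩
    · simp only [List.length_append]; omega
    · rw [List.append_assoc, List.drop_left, List.take_left]
  · rintro ⟨i, hle, heq⟩
    refine ⟨w.take i, (w.drop i).drop u.length, ?_⟩
    have h2 : u ++ (w.drop i).drop u.length = w.drop i := by
      conv_rhs => rw [← List.take_append_drop u.length (w.drop i), heq]
    rw [List.append_assoc, h2, List.take_append_drop]

lemma occ_snoc {w u : List A} {a : A} {i : ℕ} (h : i ∈ Occ w (u ++ [a])) :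
    i ∈ Occ w u ∧ i + u.length < w.length := by
  obtain ⟨h1, h2⟩ := h
  simp only [List.length_append, List.length_singleton] at h1 h2
  have hlt : i + u.length < w.length := by omega
  refine ⟨⟨by omega, ?_⟩, hlt⟩
  have := congrArg (List.take u.length) h2
  rwa [List.take_take, min_eq_left (Nat.le_succ _), List.take_left] at this

lemma occ_snoc_self {w u : List A} {i : ℕ} (h : i ∈ Occ w u)
    (hlt : i + u.length < w.length) :
    i ∈ Occ w (u ++ [w[i + u.length]]) := by
  obtain ⟨h1, h2⟩ := h
  constructor
  · simp only [List.length_append, List.length_singleton]; omega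
  · rw [List.length_append, List.length_singleton, List.take_succ, h2]
    rw [List.getElem?_drop]
    simp [List.getElem?_eq_getElem hlt]

lemma exists_snoc_infix {w u : List A} {i : ℕ} (h : i ∈ Occ w u)
    (hlt : i + u.length < w.length) : ∃ a, (u ++ [a]) <:+: w :=
  ⟨_, (infix_iff_occ w _).2 ⟨i, occ_snoc_self h hlt⟩⟩

lemma occCount_eq (w u : List A) : occCount w u = (Occ w u).ncard := rfl

section Fin
variable [Fintype A]

lemma valence_eq (w u : List A) :
    valence w u = Set.ncard {a : A | (u ++ [a]) <:+: w} := rfl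

lemma one_le_valence {w u : List A} (h : ∃ a, (u ++ [a]) <:+: w) :
    1 ≤ valence w u := by
  obtain ⟨a, ha⟩ := h
  rw [valence_eq]
  exact (Set.ncard_pos (Set.toFinite _)).2 ⟨a, ha⟩

lemma valence_exists {w u : List A} (h : valence w u ≠ 0) :
    ∃ a, (u ++ [a]) <:+: w := by
  rw [valence_eq] at h
  exact (Set.ncard_pos (Set.toFinite _)).1 (Nat.pos_of_ne_zero h)

lemma two_le_valence {w u : List A} {a b : A} (hab : a ≠ b)
    (ha : (u ++ [a]) <:+: w) (hb : (u ++ [b]) <:+: w) : 2 ≤ valence w u := by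
  rw [valence_eq]
  exact (Set.one_lt_ncard_iff (Set.toFinite _)).2 ⟨a, b, ha, hb, hab⟩

lemma valence_two_exists {w u : List A} (h : 2 ≤ valence w u) :
    ∃ a b, a ≠ b ∧ (u ++ [a]) <:+: w ∧ (u ++ [b]) <:+: w := by
  rw [valence_eq] at h
  obtain ⟨a, b, ha, hb, hab⟩ := (Set.one_lt_ncard_iff (Set.toFinite _)).1 h
  exact ⟨a, b, hab, ha, hb⟩

end Fin

/-- the suffix of `w` of length `n` -/
def sfx (w : List A) (n : ℕ) : List A := w.drop (w.length - n)

lemma sfx_length {w : List A} {n : ℕ} (h : n ≤ w.length) :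
    (sfx w n).length = n := by
  simp only [sfx, List.length_drop]; omega

lemma sfx_suffix (w : List A) (n : ℕ) : sfx w n <:+ w := List.drop_suffix _ _

lemma sfx_mem_occ {w : List A} {n : ℕ} (h : n ≤ w.length) :
    w.length - n ∈ Occ w (sfx w n) := by
  refine ⟨by rw [sfx_length h]; omega, ?_⟩
  rw [sfx_length h]
  exact List.take_of_length_le (by simp only [sfx, List.length_drop]; omega)

lemma eq_sfx_of_suffix {w u : List A} (h : u <:+ w) : u = sfx w u.length := by
  obtain ⟨s, rfl⟩ := h
  have h1 : (s ++ u).length - u.length = s.length := by simp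
  rw [sfx, h1, List.drop_left]

lemma eq_sfx_of_occ_end {w u : List A} {i : ℕ} (h : i ∈ Occ w u)
    (he : i + u.length = w.length) : u = sfx w u.length := by
  obtain ⟨h1, h2⟩ := h
  have h3 : w.drop i = u := by
    rw [← h2]; exact (List.take_of_length_le (by simp only [List.length_drop]; omega)).symm
  have h4 : w.length - u.length = i := by omega
  rw [sfx, h4]
  exact h3.symm

lemma eq_sfx_of_valence_zero [Fintype A] {w u : List A} (hu : u <:+: w)
    (hv : valence w u = 0) : u = sfx w u.length := by
  obtain ⟨i, hi⟩ := (infix_iff_occ w u).1 hu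
  rcases Nat.lt_or_ge (i + u.length) w.length with h | h
  · exact absurd (one_le_valence (exists_snoc_infix hi h)) (by omega)
  · exact eq_sfx_of_occ_end hi (le_antisymm hi.1 h)

lemma occ_sfx_shift {w : List A} {n m : ℕ} (hnm : n ≤ m) (hm : m ≤ w.length)
    {j : ℕ} (hj : j ∈ Occ w (sfx w m)) : j + (m - n) ∈ Occ w (sfx w n) := by
  obtain ⟨h1, h2⟩ := hj
  rw [sfx_length hm] at h1 h2
  refine ⟨by rw [sfx_length (le_trans hnm hm)]; omega, ?_⟩
  rw [sfx_length (le_trans hnm hm)]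
  have key := congrArg (List.drop (m - n)) h2
  rw [List.drop_take, List.drop_drop] at key
  have e1 : m - (m - n) = n := by omega
  have e2 : w.length - m + (m - n) = w.length - n := by omega
  unfold sfx at key ⊢
  rw [e1, List.drop_drop, e2] at key
  exact key

lemma occCount_sfx_propagate {w : List A} {K n : ℕ} (hKn : K ≤ n) (hn : n ≤ w.length)
    (hK : occCount w (sfx w K) = 1) : occCount w (sfx w n) = 1 := by
  have hKN : K ≤ w.length := le_trans hKn hn
  rw [occCount_eq] at hK
  obtain ⟨x, hx⟩ := Set.ncard_eq_one.1 hK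
  have hxval : x = w.length - K := by
    have h0 := sfx_mem_occ (w := w) hKN
    rw [hx] at h0; simpa using h0.symm
  subst hxval
  have hset : Occ w (sfx w n) = {w.length - n} := by
    apply Set.eq_singleton_iff_unique_mem.2
    refine ⟨sfx_mem_occ hn, fun j hj => ?_⟩
    have h2 := occ_sfx_shift hKn hn hj
    rw [hx] at h2
    have h3 : j + (sfx w n).length ≤ w.length := hj.1
    rw [sfx_length hn] at h3
    simp only [Set.mem_singleton_iff] at h2 ⊢
    omega
  rw [occCount_eq, hset, Set.ncard_singleton]

lemma valence_sfx_zero [Fintype A] {w : List A} {n : ℕ} (hn : n ≤ w.length)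
    (h1 : occCount w (sfx w n) = 1) : valence w (sfx w n) = 0 := by
  by_contra h
  obtain ⟨a, ha⟩ := valence_exists h
  obtain ⟨i, hi⟩ := (infix_iff_occ _ _).1 ha
  obtain ⟨hiu, hlt⟩ := occ_snoc hi
  rw [occCount_eq] at h1
  obtain ⟨x, hx⟩ := Set.ncard_eq_one.1 h1
  have e1 : i = x := by rw [hx] at hiu; simpa using hiu
  have e2 : w.length - n = x := by
    have h0 := sfx_mem_occ (w := w) hn
    rw [hx] at h0; simpa using h0
  rw [sfx_length hn] at hlt
  omega


def Fset (w : List A) (n : ℕ) : Set (List A) := {u | u.length = n ∧ u <:+: w}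

lemma Fset_finite (w : List A) (n : ℕ) : (Fset w n).Finite := by
  apply (w.sublists.finite_toSet).subset
  rintro u ⟨-, hinf⟩
  simp [List.mem_sublists, hinf.sublist]

lemma complexity_eq (w : List A) (n : ℕ) : complexity w n = (Fset w n).ncard := rfl

noncomputable def ext (w u : List A) : List A :=
  if h : ∃ a, (u ++ [a]) <:+: w then u ++ [h.choose] else []

lemma ext_def {w u : List A} (h : ∃ a, (u ++ [a]) <:+: w) :
    ∃ a, ext w u = u ++ [a] ∧ (u ++ [a]) <:+: w := by
  rw [ext, dif_pos h]
  exact ⟨h.choose, rfl, h.choose_spec⟩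

lemma snoc_decomp {v : List A} {n : ℕ} (h : v.length = n + 1) :
    ∃ c, v = v.take n ++ [c] := by
  obtain ⟨c, hc⟩ := List.length_eq_one_iff.1 (show (v.drop n).length = 1 by
    simp only [List.length_drop, h]; omega)
  exact ⟨c, by rw [← hc, List.take_append_drop]⟩

lemma exists_ext_of_ne_sfx {w : List A} {n : ℕ} {u : List A} (hu : u ∈ Fset w n)
    (hne : u ≠ sfx w n) : ∃ a, (u ++ [a]) <:+: w := by
  obtain ⟨hlen, hinf⟩ := hu
  obtain ⟨i, hi⟩ := (infix_iff_occ _ _).1 hinf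
  rcases Nat.lt_or_ge (i + u.length) w.length with h | h
  · exact exists_snoc_infix hi h
  · exact absurd (by rw [← hlen]; exact eq_sfx_of_occ_end hi (le_antisymm hi.1 h)) hne

lemma Fset_length_eq (w : List A) : Fset w w.length = {w} := by
  ext u
  simp only [Set.mem_singleton_iff]
  constructor
  · rintro ⟨hlen, hinf⟩; exact hinf.eq_of_length hlen
  · rintro rfl; exact ⟨rfl, List.infix_rfl⟩

lemma complexity_length (w : List A) : complexity w w.length = 1 := by
  rw [complexity_eq, Fset_length_eq, Set.ncard_singleton]

section Steps
variable [Fintype A]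

lemma take_mem_Fset {w v : List A} {n : ℕ} (hv : v ∈ Fset w (n+1)) :
    v.take n ∈ Fset w n :=
  ⟨by rw [List.length_take, hv.1]; omega, ((List.take_prefix n v).isInfix).trans hv.2⟩

lemma take_injOn {w : List A} {n : ℕ} (hv1 : ∀ u ∈ Fset w n, valence w u ≤ 1) :
    Set.InjOn (fun v => List.take n v) (Fset w (n+1)) := by
  intro v hv v' hv' heq
  simp only at heq
  obtain ⟨c, hc⟩ := snoc_decomp hv.1
  obtain ⟨c', hc'⟩ := snoc_decomp hv'.1
  by_cases hcc : c = c'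
  · rw [hc, hc', heq, hcc]
  · exfalso
    have h2 : 2 ≤ valence w (v.take n) := by
      refine two_le_valence hcc ?_ ?_
      · rw [← hc]; exact hv.2
      · rw [heq, ← hc']; exact hv'.2
    exact absurd (hv1 _ (take_mem_Fset hv)) (by omega)

lemma step_down {w : List A} {n : ℕ} (hv1 : ∀ u ∈ Fset w n, valence w u ≤ 1) :
    complexity w (n+1) ≤ complexity w n := by
  rw [complexity_eq, complexity_eq]
  exact Set.ncard_le_ncard_of_injOn (fun v => List.take n v)
    (fun v hv => take_mem_Fset hv) (take_injOn hv1) (Fset_finite w n)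

lemma step_down_strict {w : List A} {n : ℕ} (hn : n ≤ w.length)
    (hv1 : ∀ u ∈ Fset w n, valence w u ≤ 1) (hv0 : valence w (sfx w n) = 0) :
    complexity w (n+1) + 1 ≤ complexity w n := by
  have hmem : sfx w n ∈ Fset w n := ⟨sfx_length hn, (sfx_suffix w n).isInfix⟩
  have h1 : complexity w (n+1) ≤ (Fset w n \ {sfx w n}).ncard := by
    rw [complexity_eq]
    refine Set.ncard_le_ncard_of_injOn (fun v => List.take n v) ?_ (take_injOn hv1)
      ((Fset_finite w n).diff)
    intro v hv
    refine ⟨take_mem_Fset hv, ?_⟩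
    simp only [Set.mem_singleton_iff]
    intro hts
    obtain ⟨c, hc⟩ := snoc_decomp hv.1
    have hge : 1 ≤ valence w (sfx w n) :=
      one_le_valence ⟨c, by rw [← hts, ← hc]; exact hv.2⟩
    omega
  have h2 := Set.ncard_diff_singleton_add_one hmem (Fset_finite w n)
  rw [complexity_eq w n]
  omega

lemma step_up {w : List A} {n : ℕ}
    (hext : ∀ u ∈ Fset w n, ∃ a, (u ++ [a]) <:+: w) :
    complexity w n ≤ complexity w (n+1) := by
  rw [complexity_eq, complexity_eq]
  refine Set.ncard_le_ncard_of_injOn (ext w) ?_ ?_ (Fset_finite w (n+1))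
  · intro u hu
    obtain ⟨a, he, hinf⟩ := ext_def (hext u hu)
    exact ⟨by rw [he, List.length_append, List.length_singleton, hu.1], he ▸ hinf⟩
  · intro u hu u' hu' heq
    obtain ⟨a, he, -⟩ := ext_def (hext u hu)
    obtain ⟨a', he', -⟩ := ext_def (hext u' hu')
    have h3 := congrArg (List.take n) heq
    rwa [he, he', List.take_left' hu.1, List.take_left' hu'.1] at h3

lemma step_up_general (w : List A) (n : ℕ) :
    complexity w n ≤ complexity w (n+1) + 1 := by
  have hext : ∀ u ∈ Fset w n \ {sfx w n}, ∃ a, (u ++ [a]) <:+: w := by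
    rintro u ⟨hu, hne⟩
    exact exists_ext_of_ne_sfx hu (by simpa using hne)
  have h1 : (Fset w n \ {sfx w n}).ncard ≤ complexity w (n+1) := by
    rw [complexity_eq]
    refine Set.ncard_le_ncard_of_injOn (ext w) ?_ ?_ (Fset_finite w (n+1))
    · intro u hu
      obtain ⟨a, he, hinf⟩ := ext_def (hext u hu)
      exact ⟨by rw [he, List.length_append, List.length_singleton, hu.1.1], he ▸ hinf⟩
    · intro u hu u' hu' heq
      obtain ⟨a, he, -⟩ := ext_def (hext u hu)
      obtain ⟨a', he', -⟩ := ext_def (hext u' hu')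
      have h3 := congrArg (List.take n) heq
      rwa [he, he', List.take_left' hu.1.1, List.take_left' hu'.1.1] at h3
  have h2 : complexity w n ≤ (Fset w n \ {sfx w n}).ncard + 1 := by
    rw [complexity_eq]
    calc (Fset w n).ncard ≤ ((Fset w n \ {sfx w n}) ∪ {sfx w n}).ncard := by
          apply Set.ncard_le_ncard _
            (((Fset_finite w n).diff).union (Set.finite_singleton _))
          intro x hx
          by_cases hxs : x = sfx w n
          · exact Or.inr hxs
          · exact Or.inl ⟨hx, hxs⟩
      _ ≤ _ := by
          have h4 := Set.ncard_union_le (Fset w n \ {sfx w n}) ({sfx w n} : Set (List A))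
          simpa using h4
  omega

lemma step_up_two {w : List A} {n : ℕ}
    (hv0 : valence w (sfx w n) = 0) {u0 : List A} (hu0 : u0 ∈ Fset w n)
    {a b : A} (hab : a ≠ b) (ha : (u0 ++ [a]) <:+: w) (hb : (u0 ++ [b]) <:+: w) :
    complexity w n ≤ complexity w (n+1) := by
  have hu0ne : u0 ≠ sfx w n := by
    intro h
    have h1 := one_le_valence (w := w) (u := u0) ⟨a, ha⟩
    rw [h] at h1; omega
  set g : List A → List A := fun u =>
    if u = sfx w n then u0 ++ [b] else if u = u0 then u0 ++ [a] else ext w u with hg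
  have hgs : g (sfx w n) = u0 ++ [b] := by simp [hg]
  have hgu0 : g u0 = u0 ++ [a] := by simp [hg, hu0ne]
  have hgdef : ∀ u ∈ Fset w n, u ≠ sfx w n → u ≠ u0 →
      ∃ c, g u = u ++ [c] ∧ (u ++ [c]) <:+: w := by
    intro u hu h1 h2
    obtain ⟨c, hc, hinf⟩ := ext_def (exists_ext_of_ne_sfx hu h1)
    refine ⟨c, ?_, hinf⟩
    rw [hg]; simp only [if_neg h1, if_neg h2]; exact hc
  rw [complexity_eq, complexity_eq]
  refine Set.ncard_le_ncard_of_injOn g ?_ ?_ (Fset_finite w (n+1))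
  · intro u hu
    by_cases h1 : u = sfx w n
    · rw [h1, hgs]
      exact ⟨by rw [List.length_append, List.length_singleton, hu0.1], hb⟩
    · by_cases h2 : u = u0
      · rw [h2, hgu0]
        exact ⟨by rw [List.length_append, List.length_singleton, hu0.1], ha⟩
      · obtain ⟨c, hc, hinf⟩ := hgdef u hu h1 h2
        rw [hc]
        exact ⟨by rw [List.length_append, List.length_singleton, hu.1], hinf⟩
  · intro u hu u' hu' heq
    have habs : (u0 ++ [b] : List A) ≠ u0 ++ [a] := by
      intro h
      exact hab (by simpa using (List.append_cancel_left h).symm)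
    have htake : ∀ u ∈ Fset w n,
        (g u).take n = (if u = sfx w n ∨ u = u0 then u0 else u) := by
      intro v hv
      by_cases h1 : v = sfx w n
      · rw [h1, hgs, if_pos (Or.inl rfl)]
        exact List.take_left' hu0.1
      · by_cases h2 : v = u0
        · rw [h2, hgu0, if_pos (Or.inr rfl)]
          exact List.take_left' hu0.1
        · obtain ⟨c, hc, -⟩ := hgdef v hv h1 h2
          rw [hc, if_neg (by tauto)]
          exact List.take_left' hv.1
    have ht := congrArg (List.take n) heq
    rw [htake u hu, htake u' hu'] at ht
    by_cases h1 : u = sfx w n ∨ u = u0 <;> by_cases h2 : u' = sfx w n ∨ u' = u0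
    · rcases h1 with h1 | h1 <;> rcases h2 with h2 | h2
      · rw [h1, h2]
      · exfalso; rw [h1, hgs, h2, hgu0] at heq; exact habs heq
      · exfalso; rw [h1, hgu0, h2, hgs] at heq; exact habs heq.symm
      · rw [h1, h2]
    · rw [if_pos h1, if_neg h2] at ht
      push_neg at h2
      exact absurd ht.symm h2.2
    · rw [if_neg h1, if_pos h2] at ht
      push_neg at h1
      exact absurd ht h1.2
    · rw [if_neg h1, if_neg h2] at ht
      exact ht

end Steps
end CWAux

open CWAux

/-- Let `w` be a nonempty finite word of length `N`, let `R` be the minimal `n`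
such that every subword of `w` of length `n` has valence at most `1`, and `K`
the minimal length of a suffix of `w` occurring exactly once in `w`. Then the
subword complexity of `w` takes its maximal value at `R`, and moreover
`p_w(R) = N - max R K + 1`. -/
theorem complexity_max_at_R {A : Type*} [Fintype A] (w : List A) (hw : w ≠ [])
    (N : ℕ) (hN : w.length = N) (R K : ℕ)
    (hR : IsLeast {n | ∀ u : List A, u.length = n → u <:+: w → valence w u ≤ 1} R)
    (hK : IsLeast {m | ∃ u : List A, u.length = m ∧ u <:+ w ∧ occCount w u = 1} K) :
    (∀ n, complexity w n ≤ complexity w R) ∧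
      complexity w R = N - max R K + 1 := by
  subst hN
  have hRN : R ≤ w.length := by
    apply hR.2
    intro u hlen hinf
    rw [hinf.eq_of_length hlen]
    have he : {a : A | (w ++ [a]) <:+: w} = ∅ := by
      ext a
      simp only [Set.mem_setOf_eq, Set.mem_empty_iff_false, iff_false]
      intro hcon
      have := hcon.length_le
      simp at this
    rw [valence_eq, he, Set.ncard_empty]
    omega
  have hoccw : occCount w w = 1 := by
    rw [occCount_eq]
    have hs : Occ w w = {0} := by
      ext i
      simp only [Set.mem_singleton_iff]
      constructor
      · rintro ⟨h1, h2⟩; omega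
      · rintro rfl
        exact ⟨by omega, by rw [List.drop_zero]; exact List.take_length⟩
    rw [hs, Set.ncard_singleton]
  have hKN : K ≤ w.length := hK.2 ⟨w, rfl, List.suffix_rfl, hoccw⟩
  obtain ⟨uK, huKlen, huKsuf, huKocc⟩ := hK.1
  have huK : uK = sfx w K := by rw [← huKlen]; exact eq_sfx_of_suffix huKsuf
  have hKone : occCount w (sfx w K) = 1 := huK ▸ huKocc
  have hR_ge : ∀ u : List A, R ≤ u.length → valence w u ≤ 1 := by
    intro u hu
    by_contra hcon
    push_neg at hcon
    obtain ⟨a, b, hab, ha, hb⟩ := valence_two_exists hcon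
    set v := u.drop (u.length - R) with hv
    have hvlen : v.length = R := by rw [hv, List.length_drop]; omega
    have hsub : ∀ c : A, (u ++ [c]) <:+: w → (v ++ [c]) <:+: w := by
      intro c hc
      refine List.IsInfix.trans ?_ hc
      obtain ⟨s, hs⟩ := List.drop_suffix (u.length - R) u
      exact ⟨s, [], by rw [List.append_nil, ← List.append_assoc, hs]⟩
    have hvinf : v <:+: w :=
      ((List.prefix_append v [a]).isInfix).trans (hsub a ha)
    have h1 := hR.1 v hvlen hvinf
    have h2 := two_le_valence hab (hsub a ha) (hsub b hb)
    omega
  have hextlt : ∀ n, n < K → ∀ u ∈ Fset w n, ∃ a, (u ++ [a]) <:+: w := by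
    intro n hnK u hu
    by_cases hne : u = sfx w n
    · subst hne
      have hnN : n ≤ w.length := le_trans (Nat.le_of_lt hnK) hKN
      have h2 : occCount w (sfx w n) ≠ 1 := by
        intro hcon
        exact absurd (hK.2 ⟨sfx w n, sfx_length hnN, sfx_suffix w n, hcon⟩) (by omega)
      have h3 : 1 < (Occ w (sfx w n)).ncard := by
        have hpos : 0 < (Occ w (sfx w n)).ncard :=
          (Set.ncard_pos (occ_finite w _)).2 ⟨_, sfx_mem_occ hnN⟩
        rw [occCount_eq] at h2
        omega
      obtain ⟨i, j, hi, hj, hij⟩ := (Set.one_lt_ncard_iff (occ_finite w _)).1 h3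
      have hilen : i + (sfx w n).length ≤ w.length := hi.1
      have hjlen : j + (sfx w n).length ≤ w.length := hj.1
      rw [sfx_length hnN] at hilen hjlen
      rcases Nat.lt_or_ge (i + (sfx w n).length) w.length with h | h
      · exact exists_snoc_infix hi h
      · refine exists_snoc_infix hj ?_
        rw [sfx_length hnN] at h ⊢
        omega
    · exact exists_ext_of_ne_sfx hu hne
  have hR_two : ∀ n, n < R → ∃ u ∈ Fset w n,
      ∃ a b : A, a ≠ b ∧ (u ++ [a]) <:+: w ∧ (u ++ [b]) <:+: w := by
    intro n hn
    by_contra hcon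
    push_neg at hcon
    have hmem : n ∈ {n | ∀ u : List A, u.length = n → u <:+: w → valence w u ≤ 1} := by
      intro u hlen hinf
      by_contra h2
      push_neg at h2
      obtain ⟨a, b, hab, ha, hb⟩ := valence_two_exists h2
      exact (hcon u ⟨hlen, hinf⟩ a b hab ha) hb
    exact absurd (hR.2 hmem) (by omega)
  have mono_up : ∀ n, n < R → complexity w n ≤ complexity w (n+1) := by
    intro n hnR
    by_cases hnK : n < K
    · exact step_up (hextlt n hnK)
    · push_neg at hnK
      have hnN : n ≤ w.length := le_trans (le_of_lt hnR) hRN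
      have hocc1 := occCount_sfx_propagate hnK hnN hKone
      have hv0 := valence_sfx_zero hnN hocc1
      obtain ⟨u0, hu0, a, b, hab, ha, hb⟩ := hR_two n hnR
      exact step_up_two hv0 hu0 hab ha hb
  have mono_down : ∀ n, R ≤ n → complexity w (n+1) ≤ complexity w n := by
    intro n hn
    apply step_down
    intro u hu
    exact hR_ge u (by rw [hu.1]; exact hn)
  have le_of_le_R : ∀ n, n ≤ R → complexity w n ≤ complexity w R := by
    intro n hn
    have key : ∀ d, complexity w (R - d) ≤ complexity w R := by
      intro d
      induction d with
      | zero => simp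
      | succ d ih =>
        rcases Nat.lt_or_ge d R with h | h
        · have h1 := mono_up (R - (d+1)) (by omega)
          have h2 : R - (d+1) + 1 = R - d := by omega
          rw [h2] at h1
          exact le_trans h1 ih
        · have he : R - (d+1) = R - d := by omega
          rw [he]; exact ih
    have h := key (R - n)
    rwa [show R - (R - n) = n by omega] at h
  have le_of_ge_R : ∀ n, R ≤ n → complexity w n ≤ complexity w R := by
    intro n hn
    induction n, hn using Nat.le_induction with
    | base => exact le_rfl
    | succ n hn ih => exact le_trans (mono_down n hn) ih
  have hmaxN : max R K ≤ w.length := max_le hRN hKN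
  have exact_step : ∀ n, max R K ≤ n → n < w.length →
      complexity w n = complexity w (n+1) + 1 := by
    intro n hn hnN
    have h1 := step_up_general w n
    have hocc1 := occCount_sfx_propagate (le_trans (le_max_right R K) hn)
      (le_of_lt hnN) hKone
    have hv0 := valence_sfx_zero (le_of_lt hnN) hocc1
    have h2 := step_down_strict (le_of_lt hnN)
      (fun u hu => hR_ge u (by rw [hu.1]; exact le_trans (le_max_left R K) hn)) hv0
    omega
  have exact_val : ∀ d, max R K + d ≤ w.length →
      complexity w (w.length - d) = d + 1 := by
    intro d
    induction d with
    | zero =>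
      intro _
      simpa using complexity_length w
    | succ d ih =>
      intro h
      have h1 : complexity w (w.length - (d+1)) =
          complexity w (w.length - (d+1) + 1) + 1 :=
        exact_step _ (by omega) (by omega)
      rw [h1, show w.length - (d+1) + 1 = w.length - d by omega, ih (by omega)]
  have hpmax : complexity w (max R K) = w.length - max R K + 1 := by
    have h := exact_val (w.length - max R K) (by omega)
    rwa [show w.length - (w.length - max R K) = max R K by omega] at h
  have hpR : complexity w R = w.length - max R K + 1 := by
    rcases le_total K R with hKR | hRK
    · rwa [max_eq_left hKR] at hpmax ⊢
    · have const : ∀ d, d ≤ K - R → complexity w (K - d) = complexity w K := by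
        intro d
        induction d with
        | zero => intro _; norm_num
        | succ d ih =>
          intro hd
          have hn : R ≤ K - (d+1) := by omega
          have hlt : K - (d+1) < K := by omega
          have h1 := step_up (hextlt (K - (d+1)) hlt)
          have h2 := mono_down (K - (d+1)) hn
          have h3 : K - (d+1) + 1 = K - d := by omega
          rw [h3] at h1 h2
          have h4 := ih (by omega)
          omega
      have h := const (K - R) (by omega)
      rw [show K - (K - R) = R by omega] at h
      rw [max_eq_right hRK] at hpmax
      rw [h, hpmax, max_eq_right hRK]
  exact ⟨fun n => (le_total n R).elim (le_of_le_R n) (le_of_ge_R n), hpR⟩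
end

section
/- Let w be a right-infinite word over a finite alphabet, and suppose there exists N ≥ 1 such that p_w(N) = p_w(N+1). Then w is ultimately periodic, and p_w(n) = p_w(N) for all n ≥ N. -/
/-- A finite word `u` is a subword (factor) of the right-infinite word `w` if
it occurs as a contiguous block of consecutive letters of `w`. -/
def IsFactor {A : Type*} (w : ℕ → A) (u : List A) : Prop :=
  ∃ i : ℕ, u = (List.range u.length).map fun j => w (i + j)

/-- The subword complexity of a right-infinite word `w`: the number of
distinct subwords of `w` of length `n`. -/
noncomputable def icomplexity {A : Type*} (w : ℕ → A) (n : ℕ) : ℕ :=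
  Set.ncard {u : List A | u.length = n ∧ IsFactor w u}

/-- A right-infinite word is ultimately periodic if from some point on it is
periodic with some period `p ≥ 1`. -/
def UltimatelyPeriodic {A : Type*} (w : ℕ → A) : Prop :=
  ∃ p, 1 ≤ p ∧ ∃ M, ∀ i, M ≤ i → w (i + p) = w i

/-- The factor of `w` of length `n` starting at position `i`. -/
private def fac {A : Type*} (w : ℕ → A) (i n : ℕ) : List A :=
  (List.range n).map fun j => w (i + j)

private lemma fac_length {A : Type*} (w : ℕ → A) (i n : ℕ) : (fac w i n).length = n := by
  simp [fac]

private lemma fac_eq_iff {A : Type*} (w : ℕ → A) (i j n : ℕ) :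
    fac w i n = fac w j n ↔ ∀ m < n, w (i + m) = w (j + m) := by
  simp [fac, List.map_inj_left]

private lemma fac_take {A : Type*} (w : ℕ → A) (i : ℕ) {N n : ℕ} (h : N ≤ n) :
    (fac w i n).take N = fac w i N := by
  simp [fac, ← List.map_take, List.take_range, Nat.min_eq_left h]

private lemma factorSet_eq {A : Type*} (w : ℕ → A) (n : ℕ) :
    {u : List A | u.length = n ∧ IsFactor w u} = Set.range fun i => fac w i n := by
  ext u
  constructor
  · rintro ⟨hlen, i, hu⟩
    exact ⟨i, by rw [hu, hlen]; simp [fac]⟩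
  · rintro ⟨i, rfl⟩
    exact ⟨fac_length w i n, ⟨i, by rw [fac_length]; simp [fac]⟩⟩

/-- If `p_w(N) = p_w(N+1)` for some `N ≥ 1`, then the right-infinite word `w`
is ultimately periodic and `p_w(n) = p_w(N)` for all `n ≥ N`. -/
theorem ultimatelyPeriodic_of_complexity_eq {A : Type*} [Fintype A]
    (w : ℕ → A) (N : ℕ) (hN : 1 ≤ N)
    (h : icomplexity w N = icomplexity w (N + 1)) :
    UltimatelyPeriodic w ∧ ∀ n, N ≤ n → icomplexity w n = icomplexity w N := by
  have hic : ∀ n, icomplexity w n = (Set.range fun i => fac w i n).ncard := fun n => by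
    rw [icomplexity, factorSet_eq]
  have hfin : ∀ n, (Set.range fun i => fac w i n).Finite := fun n =>
    Set.Finite.subset (List.finite_length_eq A n) (by rintro u ⟨i, rfl⟩; exact fac_length w i n)
  have himg : ∀ n, N ≤ n → (fun u : List A => u.take N) '' (Set.range fun i => fac w i n)
      = Set.range fun i => fac w i N := by
    intro n hn
    rw [← Set.range_comp]
    exact congrArg Set.range (funext fun i => fac_take w i hn)
  have hinj : Set.InjOn (fun u : List A => u.take N) (Set.range fun i => fac w i (N + 1)) := by
    apply Set.injOn_of_ncard_image_eq _ (hfin (N + 1))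
    rw [himg (N + 1) (Nat.le_succ N), ← hic N, ← hic (N + 1), h]
  have step : ∀ i j, fac w i N = fac w j N → ∀ m ≤ N, w (i + m) = w (j + m) := by
    intro i j hij m hm
    have h1 : fac w i (N + 1) = fac w j (N + 1) := by
      apply hinj ⟨i, rfl⟩ ⟨j, rfl⟩
      show (fac w i (N + 1)).take N = (fac w j (N + 1)).take N
      rw [fac_take w i (Nat.le_succ N), fac_take w j (Nat.le_succ N), hij]
    exact (fac_eq_iff w i j (N + 1)).1 h1 m (by omega)
  have key : ∀ i j, fac w i N = fac w j N → ∀ k, w (i + k) = w (j + k) := by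
    intro i j hij
    have all : ∀ k, fac w (i + k) N = fac w (j + k) N := by
      intro k
      induction k with
      | zero => simpa using hij
      | succ k ih =>
        rw [fac_eq_iff]
        intro m hm
        have h2 := step _ _ ih (m + 1) (by omega)
        have e1 : i + k + (m + 1) = i + (k + 1) + m := by omega
        have e2 : j + k + (m + 1) = j + (k + 1) + m := by omega
        rwa [e1, e2] at h2
    intro k
    simpa using step _ _ (all k) 0 (by omega)
  constructor
  · haveI : Finite ↥(Set.range fun i => fac w i N) := (hfin N).to_subtype
    obtain ⟨i, j, hne, hf⟩ :=
      Finite.exists_ne_map_eq_of_infinite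
        (fun i : ℕ => (⟨fac w i N, ⟨i, rfl⟩⟩ : ↥(Set.range fun i => fac w i N)))
    have hf' : fac w i N = fac w j N := congrArg Subtype.val hf
    have main : ∀ i j : ℕ, i < j → fac w i N = fac w j N → UltimatelyPeriodic w := by
      intro i j hlt hij
      refine ⟨j - i, by omega, i, fun i' hi' => ?_⟩
      have hk := (key i j hij (i' - i)).symm
      have e1 : j + (i' - i) = i' + (j - i) := by omega
      have e2 : i + (i' - i) = i' := by omega
      rwa [e1, e2] at hk
    rcases hne.lt_or_gt with hlt | hlt
    · exact main i j hlt hf'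
    · exact main j i hlt hf'.symm
  · intro n hn
    have hinjn : Set.InjOn (fun u : List A => u.take N) (Set.range fun i => fac w i n) := by
      rintro u ⟨i, rfl⟩ v ⟨j, rfl⟩ huv
      have hNfac : fac w i N = fac w j N := by
        have := huv
        simpa [fac_take w i hn, fac_take w j hn] using this
      rw [show (fun i => fac w i n) i = fac w i n from rfl,
        show (fun i => fac w i n) j = fac w j n from rfl, fac_eq_iff]
      intro m _
      exact key i j hNfac m
    rw [hic n, ← Set.ncard_image_of_injOn hinjn, himg n hn, hic N]
end

section
/- If w is an unbalanced right-infinite word over the binary alphabet {0,1}, then there exists a finite word w' (a subword of w) such that both 0w'0 and 1w'1 are subwords of w. -/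
/-- The height of a finite binary word: the number of occurrences of the
letter `1` (here `true`). -/
def height (u : List Bool) : ℕ := u.count true

/-- A right-infinite binary word is balanced if any two of its subwords of
equal length have heights differing by at most `1`. -/
def BalancedWord (w : ℕ → Bool) : Prop :=
  ∀ u v : List Bool, IsFactor w u → IsFactor w v → u.length = v.length →
    |(height u : ℤ) - (height v : ℤ)| ≤ 1

/-- Number of `true`s in the window of `w` of length `n` starting at `i`. -/
def cnt (w : ℕ → Bool) (i n : ℕ) : ℕ :=
  ∑ k ∈ Finset.range n, (if w (i + k) then 1 else 0)

lemma cnt_succ (w : ℕ → Bool) (i n : ℕ) :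
    cnt w i (n + 1) = cnt w i n + (if w (i + n) then 1 else 0) :=
  Finset.sum_range_succ _ _

lemma cnt_one (w : ℕ → Bool) (i : ℕ) : cnt w i 1 = if w i then 1 else 0 := by
  rw [show (1:ℕ) = 0 + 1 from rfl, cnt_succ]
  simp [cnt]

lemma cnt_add (w : ℕ → Bool) (i m n : ℕ) :
    cnt w i (m + n) = cnt w i m + cnt w (i + m) n := by
  induction n with
  | zero => simp [cnt]
  | succ n ih =>
    rw [show m + (n + 1) = (m + n) + 1 from rfl, cnt_succ, ih, cnt_succ,
      show i + (m + n) = i + m + n by omega]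
    omega

lemma cnt_le (w : ℕ → Bool) (i n : ℕ) : cnt w i n ≤ n := by
  induction n with
  | zero => simp [cnt]
  | succ n ih =>
    rw [cnt_succ]
    split <;> omega

lemma height_window (w : ℕ → Bool) (i n : ℕ) :
    height ((List.range n).map fun k => w (i + k)) = cnt w i n := by
  induction n with
  | zero => simp [height, cnt]
  | succ n ih =>
    rw [cnt_succ, List.range_succ, List.map_append, height, List.count_append]
    rw [height] at ih
    rcases hb : w (i + n) <;> simp [hb, ih]

lemma window_decomp (w : ℕ → Bool) (i m : ℕ) :
    (List.range (m + 2)).map (fun k => w (i + k)) =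
      w i :: (((List.range m).map fun k => w (i + 1 + k)) ++ [w (i + (m + 1))]) := by
  rw [show m + 2 = (m + 1) + 1 from rfl, List.range_succ, List.map_append,
    List.range_succ_eq_map, List.map_cons, List.map_map, List.cons_append]
  have h1 : ((fun k => w (i + k)) ∘ Nat.succ) = fun k => w (i + 1 + k) := by
    funext k
    simp only [Function.comp_apply]
    congr 1
    omega
  rw [h1]
  norm_num

/-- If a right-infinite binary word `w` is unbalanced, then there is a subword
`w'` of `w` such that both `0w'0` and `1w'1` are subwords of `w`
(with `0 = false` and `1 = true`). -/
theorem exists_unbalanced_factor (w : ℕ → Bool) (h : ¬ BalancedWord w) :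
    ∃ w' : List Bool, IsFactor w w' ∧
      IsFactor w (false :: (w' ++ [false])) ∧
      IsFactor w (true :: (w' ++ [true])) := by
  classical
  have hex : ∃ n, ∃ i j : ℕ, cnt w j n + 2 ≤ cnt w i n := by
    rw [BalancedWord] at h
    push_neg at h
    obtain ⟨u, v, ⟨iu, hu⟩, ⟨iv, hv⟩, hlen, habs⟩ := h
    have h1 : height u = cnt w iu u.length := by
      have h' := height_window w iu u.length
      rw [← hu] at h'
      exact h'
    have h2 : height v = cnt w iv v.length := by
      have h' := height_window w iv v.length
      rw [← hv] at h'
      exact h'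
    rw [lt_abs] at habs
    rw [← hlen] at h2
    rcases habs with hc | hc
    · exact ⟨u.length, iu, iv, by omega⟩
    · exact ⟨u.length, iv, iu, by omega⟩
  obtain ⟨n, hn2, key, i, j, hij⟩ :
      ∃ n, 2 ≤ n ∧ (∀ n' < n, ∀ a b, cnt w a n' ≤ cnt w b n' + 1) ∧
        ∃ i j, cnt w j n + 2 ≤ cnt w i n := by
    refine ⟨Nat.find hex, ?_, ?_, Nat.find_spec hex⟩
    · obtain ⟨i, j, hij⟩ := Nat.find_spec hex
      have := cnt_le w i (Nat.find hex)
      omega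
    · intro n' hn' a b
      have hm := Nat.find_min hex hn'
      push_neg at hm
      have := hm a b
      omega
  obtain ⟨m, rfl⟩ : ∃ m, n = m + 2 := ⟨n - 2, by omega⟩
  -- decompositions removing first / last letters
  have e_i1 : cnt w i (m + 2) = (if w i then 1 else 0) + cnt w (i + 1) (m + 1) := by
    have h' := cnt_add w i 1 (m + 1)
    rw [show 1 + (m + 1) = m + 2 by omega, cnt_one] at h'
    exact h'
  have e_j1 : cnt w j (m + 2) = (if w j then 1 else 0) + cnt w (j + 1) (m + 1) := by
    have h' := cnt_add w j 1 (m + 1)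
    rw [show 1 + (m + 1) = m + 2 by omega, cnt_one] at h'
    exact h'
  have e_i2 : cnt w i (m + 2) = cnt w i (m + 1) + (if w (i + (m + 1)) then 1 else 0) :=
    cnt_succ w i (m + 1)
  have e_j2 : cnt w j (m + 2) = cnt w j (m + 1) + (if w (j + (m + 1)) then 1 else 0) :=
    cnt_succ w j (m + 1)
  have k1 := key (m + 1) (by omega)
  have bi_le : (if w i then (1:ℕ) else 0) ≤ 1 := by split <;> omega
  have bj_le : (if w j then (1:ℕ) else 0) ≤ 1 := by split <;> omega
  have ci_le : (if w (i + (m + 1)) then (1:ℕ) else 0) ≤ 1 := by split <;> omega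
  have cj_le : (if w (j + (m + 1)) then (1:ℕ) else 0) ≤ 1 := by split <;> omega
  have hk1 := k1 (i + 1) (j + 1)
  have hk1' := k1 i j
  have hbi : (if w i then (1:ℕ) else 0) = 1 ∧ (if w j then (1:ℕ) else 0) = 0 := by
    omega
  have hci : (if w (i + (m + 1)) then (1:ℕ) else 0) = 1 ∧
      (if w (j + (m + 1)) then (1:ℕ) else 0) = 0 := by
    omega
  have hwi : w i = true := by
    cases hw : w i
    · rw [hw] at hbi; simp at hbi
    · rfl
  have hwj : w j = false := by
    cases hw : w j
    · rfl
    · rw [hw] at hbi; simp at hbi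
  have hwi2 : w (i + (m + 1)) = true := by
    cases hw : w (i + (m + 1))
    · rw [hw] at hci; simp at hci
    · rfl
  have hwj2 : w (j + (m + 1)) = false := by
    cases hw : w (j + (m + 1))
    · rfl
    · rw [hw] at hci; simp at hci
  -- the middle parts agree
  have mid : ∀ k, 1 ≤ k → k ≤ m → w (i + k) = w (j + k) := by
    by_contra hc
    push_neg at hc
    obtain ⟨k0, hk01, hk02, hk03⟩ := hc
    have hQ : ∃ k, 1 ≤ k ∧ k ≤ m ∧ w (i + k) ≠ w (j + k) := ⟨k0, hk01, hk02, hk03⟩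
    set p := Nat.find hQ with hp_def
    obtain ⟨hp1, hp2, hp3⟩ := Nat.find_spec hQ
    have hmin : ∀ t, t < p → 1 ≤ t → w (i + t) = w (j + t) := by
      intro t ht h1t
      by_contra hne
      exact Nat.find_min hQ ht ⟨h1t, by omega, hne⟩
    obtain ⟨q, hq⟩ : ∃ q, p = q + 1 := ⟨p - 1, by omega⟩
    have C : cnt w (i + 1) q = cnt w (j + 1) q := by
      apply Finset.sum_congr rfl
      intro k hk
      have hk' : k < q := Finset.mem_range.mp hk
      have heq := hmin (k + 1) (by omega) (by omega)
      rw [show i + 1 + k = i + (k + 1) by omega, show j + 1 + k = j + (k + 1) by omega, heq]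
    have dA : cnt w i (p + 1)
        = (if w i then 1 else 0) + cnt w (i + 1) q + (if w (i + p) then 1 else 0) := by
      rw [cnt_succ, show p = 1 + q by omega, cnt_add, cnt_one]
    have dB : cnt w j (p + 1)
        = (if w j then 1 else 0) + cnt w (j + 1) q + (if w (j + p) then 1 else 0) := by
      rw [cnt_succ, show p = 1 + q by omega, cnt_add, cnt_one]
    cases ha : w (i + p) <;> cases hb : w (j + p)
    · exact hp3 (by rw [ha, hb])
    · -- a = false, b = true : suffix windows give a smaller violation
      have dS : cnt w i (m + 2) = cnt w i (p + 1) + cnt w (i + (p + 1)) (m + 1 - p) := by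
        have h' := cnt_add w i (p + 1) (m + 1 - p)
        rw [show p + 1 + (m + 1 - p) = m + 2 by omega] at h'
        exact h'
      have dT : cnt w j (m + 2) = cnt w j (p + 1) + cnt w (j + (p + 1)) (m + 1 - p) := by
        have h' := cnt_add w j (p + 1) (m + 1 - p)
        rw [show p + 1 + (m + 1 - p) = m + 2 by omega] at h'
        exact h'
      have hk := key (m + 1 - p) (by omega) (i + (p + 1)) (j + (p + 1))
      rw [hwi, ha] at dA
      rw [hwj, hb] at dB
      simp at dA dB
      omega
    · -- a = true, b = false : prefix windows give a smaller violation
      have hk := key (p + 1) (by omega) i j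
      rw [hwi, ha] at dA
      rw [hwj, hb] at dB
      simp at dA dB
      omega
    · exact hp3 (by rw [ha, hb])
  -- build the witness
  refine ⟨(List.range m).map (fun k => w (i + 1 + k)), ⟨i + 1, ?_⟩, ⟨j, ?_⟩, ⟨i, ?_⟩⟩
  · simp
  · have hlen : (false :: (((List.range m).map fun k => w (i + 1 + k)) ++ [false])).length
        = m + 2 := by simp
    rw [hlen, window_decomp, hwj, hwj2]
    congr 1
    congr 1
    apply List.map_congr_left
    intro k hk
    have hk' : k < m := List.mem_range.mp hk
    have := mid (k + 1) (by omega) (by omega)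
    rw [show j + 1 + k = j + (k + 1) by omega, show i + 1 + k = i + (k + 1) by omega, this]
  · have hlen : (true :: (((List.range m).map fun k => w (i + 1 + k)) ++ [true])).length
        = m + 2 := by simp
    rw [hlen, window_decomp, hwi, hwi2]
end

section
/- Let w be a right-infinite word over the binary alphabet {0,1}. If w is balanced, then p_w(n) ≤ n + 1 for all n > 0. -/
/-- The factor of `w` of length `n` starting at position `i`. -/
def word {A : Type*} (w : ℕ → A) (i n : ℕ) : List A :=
  (List.range n).map fun j => w (i + j)

lemma word_length {A : Type*} (w : ℕ → A) (i n : ℕ) : (word w i n).length = n := by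
  simp [word]

lemma isFactor_iff {A : Type*} (w : ℕ → A) (u : List A) :
    IsFactor w u ↔ ∃ i, u = word w i u.length := Iff.rfl

lemma isFactor_word {A : Type*} (w : ℕ → A) (i n : ℕ) : IsFactor w (word w i n) := by
  exact ⟨i, by rw [word_length]; rfl⟩

lemma word_succ {A : Type*} (w : ℕ → A) (i n : ℕ) :
    word w i (n + 1) = word w i n ++ [w (i + n)] := by
  simp [word, List.range_succ]

lemma word_succ_cons {A : Type*} (w : ℕ → A) (i n : ℕ) :
    word w i (n + 1) = w i :: word w (i + 1) n := by
  simp only [word, List.range_succ_eq_map, List.map_cons, List.map_map, Nat.add_zero]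
  congr 1
  apply List.map_congr_left
  intro j _
  simp [Function.comp]
  ring_nf

/-- The tail of a factor is a factor. -/
lemma isFactor_tail {A : Type*} (w : ℕ → A) (a : A) (u : List A)
    (h : IsFactor w (a :: u)) : IsFactor w u := by
  obtain ⟨i, hi⟩ := h
  refine ⟨i + 1, ?_⟩
  have : a :: u = word w i (u.length + 1) := hi
  rw [word_succ_cons] at this
  exact (List.cons.injEq _ _ _ _ ▸ this).2

/-- The `dropLast` of a factor is a factor. -/
lemma isFactor_dropLast {A : Type*} (w : ℕ → A) (u : List A) (n : ℕ)
    (hlen : u.length = n + 1) (h : IsFactor w u) :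
    IsFactor w u.dropLast ∧ u.dropLast.length = n := by
  obtain ⟨i, hi⟩ := h
  rw [hlen] at hi
  have hi' : u = word w i (n + 1) := hi
  rw [hi', word_succ, List.dropLast_concat]
  exact ⟨isFactor_word w i n, word_length w i n⟩

/-- A right-special factor: both one-letter extensions occur. -/
def RS (w : ℕ → Bool) (v : List Bool) : Prop :=
  IsFactor w (v ++ [false]) ∧ IsFactor w (v ++ [true])

lemma rs_tail {w : ℕ → Bool} {a : Bool} {v : List Bool} (h : RS w (a :: v)) : RS w v :=
  ⟨isFactor_tail w a _ h.1, isFactor_tail w a _ h.2⟩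

/-- In a balanced word there is at most one right-special factor of each length. -/
lemma rs_unique {w : ℕ → Bool} (hb : BalancedWord w) :
    ∀ n (u v : List Bool), u.length = n → v.length = n → RS w u → RS w v → u = v := by
  intro n
  induction n with
  | zero =>
    intro u v hu hv _ _
    rw [List.length_eq_zero_iff] at hu hv
    rw [hu, hv]
  | succ m ih =>
    intro u v hu hv hru hrv
    obtain ⟨a, u', rfl⟩ : ∃ a u', u = a :: u' := by
      cases u with
      | nil => simp at hu
      | cons a u' => exact ⟨a, u', rfl⟩
    obtain ⟨b, v', rfl⟩ : ∃ b v', v = b :: v' := by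
      cases v with
      | nil => simp at hv
      | cons b v' => exact ⟨b, v', rfl⟩
    simp only [List.length_cons, Nat.succ.injEq] at hu hv
    have htails : u' = v' := ih u' v' hu hv (rs_tail hru) (rs_tail hrv)
    subst htails
    by_cases hab : a = b
    · rw [hab]
    · -- one of a,b is true, the other false; derive a contradiction with balance
      exfalso
      -- WLOG a = true, b = false
      have key : ∀ s : List Bool, IsFactor w (true :: s ++ [true]) →
          IsFactor w (false :: s ++ [false]) → False := by
        intro s h1 h0
        have hlen : (true :: s ++ [true]).length = (false :: s ++ [false]).length := by simp
        have := hb _ _ h1 h0 hlen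
        have hh1 : height (true :: s ++ [true]) = s.count true + 2 := by
          simp [height, List.count_cons, List.count_append]
        have hh0 : height (false :: s ++ [false]) = s.count true := by
          simp [height, List.count_cons, List.count_append]
        rw [hh1, hh0] at this
        push_cast at this
        have h2 : ((s.count true : ℤ) + 2) - (s.count true) = 2 := by ring
        rw [h2] at this
        norm_num at this
      cases a <;> cases b <;> simp_all
      · exact key u' hrv.2 hru.1
      · exact key u' hru.2 hrv.1

lemma factorSet_finite (w : ℕ → Bool) (n : ℕ) :
    {u : List Bool | u.length = n ∧ IsFactor w u}.Finite :=
  (List.finite_length_eq Bool n).subset fun _ hu => hu.1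

lemma exists_concat_of_length_succ (u : List Bool) (n : ℕ) (hu : u.length = n + 1) :
    ∃ b, u = u.dropLast ++ [b] := by
  have hne : u ≠ [] := by intro h; simp [h] at hu
  exact ⟨u.getLast hne, (List.dropLast_append_getLast hne).symm⟩

lemma icomplexity_succ_le (w : ℕ → Bool) (hb : BalancedWord w) (n : ℕ) :
    icomplexity w (n + 1) ≤ icomplexity w n + 1 := by
  classical
  have hS := factorSet_finite w (n + 1)
  have hT := factorSet_finite w n
  set s := hS.toFinset with hs_def
  set t := hT.toFinset with ht_def
  have hmem_s : ∀ u : List Bool, u ∈ s ↔ u.length = n + 1 ∧ IsFactor w u := by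
    intro u; rw [hs_def, Set.Finite.mem_toFinset]; rfl
  have hmem_t : ∀ u : List Bool, u ∈ t ↔ u.length = n ∧ IsFactor w u := by
    intro u; rw [ht_def, Set.Finite.mem_toFinset]; rfl
  have hdl : ∀ u ∈ s, u.dropLast ∈ t := by
    intro u hu
    rw [hmem_s] at hu
    obtain ⟨h1, h2⟩ := isFactor_dropLast w u n hu.1 hu.2
    rw [hmem_t]; exact ⟨h2, h1⟩
  -- key: if two distinct elements of s have the same dropLast v, then v is right-special
  have hrs : ∀ u1 ∈ s, ∀ u2 ∈ s, u1 ≠ u2 → u1.dropLast = u2.dropLast →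
      RS w u1.dropLast ∧ u1.dropLast.length = n ∧ (u1 = u1.dropLast ++ [true] ∨ u2 = u1.dropLast ++ [true]) := by
    intro u1 h1 u2 h2 hne heq
    rw [hmem_s] at h1 h2
    obtain ⟨b1, hb1⟩ := exists_concat_of_length_succ u1 n h1.1
    obtain ⟨b2, hb2⟩ := exists_concat_of_length_succ u2 n h2.1
    rw [← heq] at hb2
    have hbne : b1 ≠ b2 := by
      intro hcontra; apply hne; rw [hb1, hb2, hcontra]
    have hlen : u1.dropLast.length = n := by
      have := (isFactor_dropLast w u1 n h1.1 h1.2).2; exact this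
    refine ⟨?_, hlen, ?_⟩
    · constructor
      · cases b1 with
        | false => rw [← hb1]; exact h1.2
        | true =>
          have : b2 = false := by
            cases b2 with
            | false => rfl
            | true => exact absurd rfl hbne
          rw [this] at hb2; rw [← hb2]; exact h2.2
      · cases b1 with
        | true => rw [← hb1]; exact h1.2
        | false =>
          have : b2 = true := by
            cases b2 with
            | true => rfl
            | false => exact absurd rfl hbne
          rw [this] at hb2; rw [← hb2]; exact h2.2
    · cases b1 with
      | true => left; rw [← hb1]
      | false =>
        have : b2 = true := by
          cases b2 with
          | true => rfl
          | false => exact absurd rfl hbne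
        right; rw [this] at hb2; rw [← hb2]
  have hcard : s.card ≤ t.card + 1 := by
    by_cases hex : ∃ v : List Bool, v.length = n ∧ RS w v
    · obtain ⟨r, hrlen, hr⟩ := hex
      set x := r ++ [true] with hx_def
      have hinj : Set.InjOn List.dropLast (↑(s.erase x) : Set (List Bool)) := by
        intro u1 h1 u2 h2 heq
        simp only [Finset.coe_erase, Set.mem_diff, Finset.mem_coe, Set.mem_singleton_iff] at h1 h2
        by_contra hne
        obtain ⟨hrs', hlen', hor⟩ := hrs u1 h1.1 u2 h2.1 hne heq
        have hvr : u1.dropLast = r := rs_unique hb n _ r hlen' hrlen hrs' hr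
        rw [hvr] at hor
        rcases hor with h' | h'
        · exact h1.2 h'
        · exact h2.2 h'
      have h1 : (s.erase x).card ≤ t.card :=
        Finset.card_le_card_of_injOn List.dropLast
          (fun u hu => hdl u (Finset.mem_of_mem_erase hu)) hinj
      have h2 : s.card ≤ (s.erase x).card + 1 := by
        by_cases hx : x ∈ s
        · rw [Finset.card_erase_of_mem hx]
          have : 1 ≤ s.card := Finset.card_pos.2 ⟨x, hx⟩
          omega
        · rw [Finset.erase_eq_of_notMem hx]; omega
      omega
    · have hinj : Set.InjOn List.dropLast (↑s : Set (List Bool)) := by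
        intro u1 h1 u2 h2 heq
        by_contra hne
        obtain ⟨hrs', hlen', _⟩ := hrs u1 h1 u2 h2 hne heq
        exact hex ⟨u1.dropLast, hlen', hrs'⟩
      have := Finset.card_le_card_of_injOn List.dropLast hdl hinj
      omega
  have e1 : icomplexity w (n + 1) = s.card := Set.ncard_eq_toFinset_card _ hS
  have e2 : icomplexity w n = t.card := Set.ncard_eq_toFinset_card _ hT
  rw [e1, e2]; exact hcard

lemma icomplexity_zero_le (w : ℕ → Bool) : icomplexity w 0 ≤ 1 := by
  have hsub : {u : List Bool | u.length = 0 ∧ IsFactor w u} ⊆ {[]} := by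
    intro u hu
    rw [Set.mem_singleton_iff, ← List.length_eq_zero_iff]
    exact hu.1
  calc icomplexity w 0 ≤ ({[]} : Set (List Bool)).ncard :=
        Set.ncard_le_ncard hsub (Set.finite_singleton _)
    _ = 1 := Set.ncard_singleton _

/-- If a right-infinite binary word `w` is balanced, then `p_w(n) ≤ n + 1`
for all `n > 0`. -/
theorem icomplexity_le_of_balanced (w : ℕ → Bool) (h : BalancedWord w)
    (n : ℕ) (hn : 0 < n) : icomplexity w n ≤ n + 1 := by
  clear hn
  induction n with
  | zero => exact le_trans (icomplexity_zero_le w) (by omega)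
  | succ m ih =>
    calc icomplexity w (m + 1) ≤ icomplexity w m + 1 := icomplexity_succ_le w h m
      _ ≤ m + 1 + 1 := by omega
end

section
/- Let w be a right-infinite word over the binary alphabet {0,1}. Then w is Sturmian (i.e., p_w(n) = n+1 for all n ≥ 1) if and only if w is balanced and not ultimately periodic. -/
namespace Sturm

/-- the window of length `n` starting at `i` -/
def win (w : ℕ → Bool) (i n : ℕ) : List Bool := (List.range n).map fun j => w (i + j)

@[simp] lemma win_length (w : ℕ → Bool) (i n : ℕ) : (win w i n).length = n := by
  simp [win]

@[simp] lemma win_getElem (w : ℕ → Bool) (i n j : ℕ) (h : j < n) :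
    (win w i n)[j]'(by simpa using h) = w (i + j) := by
  simp [win]

lemma win_succ_r (w : ℕ → Bool) (i n : ℕ) :
    win w i (n + 1) = win w i n ++ [w (i + n)] := by
  simp [win, List.range_succ]

lemma win_succ_l (w : ℕ → Bool) (i n : ℕ) :
    win w i (n + 1) = w i :: win w (i + 1) n := by
  apply List.ext_getElem (by simp)
  intro j h1 h2
  rcases j with _ | j
  · simp
  · have hj : j < n := by simpa using h2
    rw [win_getElem w i (n+1) (j+1) (by omega), List.getElem_cons_succ,
      win_getElem w (i+1) n j hj]
    congr 1
    omega

lemma isFactor_win (w : ℕ → Bool) (i n : ℕ) : IsFactor w (win w i n) :=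
  ⟨i, by simp [win]⟩

lemma factor_getElem {w : ℕ → Bool} {u : List Bool} (hf : IsFactor w u) :
    ∃ i, ∀ x (hx : x < u.length), u[x] = w (i + x) := by
  obtain ⟨i, h⟩ := hf
  refine ⟨i, fun x hx => ?_⟩
  rw [List.getElem_of_eq h hx]
  simp

lemma isFactor_of_getElem {w : ℕ → Bool} {u : List Bool} (i : ℕ)
    (h : ∀ x (hx : x < u.length), u[x] = w (i + x)) : IsFactor w u := by
  refine ⟨i, List.ext_getElem (by simp) (fun j h1 h2 => ?_)⟩
  simp only [List.getElem_map, List.getElem_range]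
  exact h j h1

lemma eq_win_of_getElem {w : ℕ → Bool} {u : List Bool} {i n : ℕ} (hlen : u.length = n)
    (h : ∀ x (hx : x < u.length), u[x] = w (i + x)) : u = win w i n := by
  apply List.ext_getElem (by simp [hlen])
  intro j h1 h2
  rw [win_getElem _ _ _ _ (by omega), h j h1]

lemma isFactor_iff_win {w : ℕ → Bool} {u : List Bool} :
    IsFactor w u ↔ ∃ i, u = win w i u.length := Iff.rfl

lemma win_eq_win {w : ℕ → Bool} {i i' n : ℕ} :
    win w i n = win w i' n ↔ ∀ x < n, w (i + x) = w (i' + x) := by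
  constructor
  · intro h x hx
    have h2 := List.getElem_of_eq h (i := x) (by simpa using hx)
    rw [win_getElem _ _ _ _ hx] at h2
    rw [h2, win_getElem _ _ _ _ hx]
  · intro h
    apply List.ext_getElem (by simp)
    intro j h1 h2
    have hj : j < n := by simpa using h1
    rw [win_getElem _ _ _ _ hj, win_getElem _ _ _ _ hj]
    exact h j hj

lemma factor_infix {w : ℕ → Bool} {u v : List Bool} (hi : u <:+: v)
    (hv : IsFactor w v) : IsFactor w u := by
  obtain ⟨s, t, rfl⟩ := hi
  obtain ⟨i, hw⟩ := factor_getElem hv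
  apply isFactor_of_getElem (i + s.length)
  intro x hx
  have hb : s.length + x < (s ++ u ++ t).length := by simp; omega
  have h2 : (s ++ u ++ t).getD (s.length + x) false = w (i + (s.length + x)) := by
    rw [List.getD_eq_getElem _ _ hb]; exact hw _ hb
  rw [List.append_assoc, List.getD_append_right _ _ _ _ (by omega),
    Nat.add_sub_cancel_left, List.getD_append _ _ _ _ hx, List.getD_eq_getElem _ _ hx] at h2
  rw [h2]
  congr 1
  omega

lemma factor_of_prefix {w : ℕ → Bool} {u v : List Bool} (h : u <+: v)
    (hv : IsFactor w v) : IsFactor w u := factor_infix h.isInfix hv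

lemma factor_of_suffix {w : ℕ → Bool} {u v : List Bool} (h : u <:+ v)
    (hv : IsFactor w v) : IsFactor w u := factor_infix h.isInfix hv

/-- factors of length n -/
def Fset (w : ℕ → Bool) (n : ℕ) : Set (List Bool) := {u | u.length = n ∧ IsFactor w u}

lemma icomp_eq (w : ℕ → Bool) (n : ℕ) : icomplexity w n = (Fset w n).ncard := rfl

lemma Fset_finite (w : ℕ → Bool) (n : ℕ) : (Fset w n).Finite :=
  (List.finite_length_eq Bool n).subset fun _ h => h.1

lemma win_mem_Fset (w : ℕ → Bool) (i n : ℕ) : win w i n ∈ Fset w n :=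
  ⟨by simp, isFactor_win w i n⟩

lemma p0 (w : ℕ → Bool) : icomplexity w 0 = 1 := by
  have : Fset w 0 = {([] : List Bool)} := by
    ext u
    simp only [Fset, Set.mem_setOf_eq, List.length_eq_zero_iff, Set.mem_singleton_iff]
    constructor
    · rintro ⟨h, -⟩; exact h
    · rintro rfl; exact ⟨rfl, ⟨0, rfl⟩⟩
  rw [icomp_eq, this, Set.ncard_singleton]

end Sturm


namespace Sturm

/-- right special -/
def RSp (w : ℕ → Bool) (u : List Bool) : Prop :=
  IsFactor w (u ++ [false]) ∧ IsFactor w (u ++ [true])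

def RSset (w : ℕ → Bool) (n : ℕ) : Set (List Bool) := {u | u.length = n ∧ RSp w u}

lemma RSset_subset (w : ℕ → Bool) (n : ℕ) : RSset w n ⊆ Fset w n := by
  rintro u ⟨hl, hf, -⟩
  exact ⟨hl, factor_of_prefix ⟨[false], rfl⟩ hf⟩

lemma RSset_finite (w : ℕ → Bool) (n : ℕ) : (RSset w n).Finite :=
  (Fset_finite w n).subset (RSset_subset w n)

lemma append_mem_Fset {w : ℕ → Bool} {u : List Bool} {n : ℕ}
    (h : u ∈ Fset w n) : ∃ c : Bool, u ++ [c] ∈ Fset w (n+1) := by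
  obtain ⟨hl, i, hu⟩ := h
  refine ⟨w (i + n), by simp [hl], ?_⟩
  have h2 : u ++ [w (i + n)] = win w i (n+1) := by
    rw [win_succ_r]
    congr 1
    rw [← hl]; exact hu
  rw [h2]
  exact isFactor_win w i (n+1)

/-- the counting identity -/
lemma CNT (w : ℕ → Bool) (n : ℕ) :
    icomplexity w (n+1) = icomplexity w n + (RSset w n).ncard := by
  classical
  set A : Set (List Bool) := {u | u.length = n ∧ IsFactor w (u ++ [false])} with hA
  set B : Set (List Bool) := {u | u.length = n ∧ IsFactor w (u ++ [true])} with hB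
  have hAF : A ⊆ Fset w n := fun u hu =>
    ⟨hu.1, factor_of_prefix ⟨[false], rfl⟩ hu.2⟩
  have hBF : B ⊆ Fset w n := fun u hu =>
    ⟨hu.1, factor_of_prefix ⟨[true], rfl⟩ hu.2⟩
  have hAfin : A.Finite := (Fset_finite w n).subset hAF
  have hBfin : B.Finite := (Fset_finite w n).subset hBF
  have hunion : A ∪ B = Fset w n := by
    apply Set.Subset.antisymm (Set.union_subset hAF hBF)
    intro u hu
    obtain ⟨c, hc⟩ := append_mem_Fset hu
    cases c
    · exact Or.inl ⟨hu.1, hc.2⟩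
    · exact Or.inr ⟨hu.1, hc.2⟩
  have hinter : A ∩ B = RSset w n := by
    ext u
    constructor
    · rintro ⟨⟨h1, h2⟩, ⟨h3, h4⟩⟩; exact ⟨h1, h2, h4⟩
    · rintro ⟨h1, h2, h3⟩; exact ⟨⟨h1, h2⟩, ⟨h1, h3⟩⟩
  set A' : Set (List Bool) := (fun u => u ++ [false]) '' A with hA'
  set B' : Set (List Bool) := (fun u => u ++ [true]) '' B with hB'
  have hinjf : Function.Injective (fun u : List Bool => u ++ [false]) := by
    intro x y h; simpa using h
  have hinjt : Function.Injective (fun u : List Bool => u ++ [true]) := by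
    intro x y h; simpa using h
  have hdisj : Disjoint A' B' := by
    rw [Set.disjoint_left]
    rintro x ⟨a, -, rfl⟩ ⟨b, -, hb⟩
    have h3 := congrArg (fun l => l.getLast?) hb
    simp at h3
  have hsplit : A' ∪ B' = Fset w (n+1) := by
    apply Set.Subset.antisymm
    · rintro x (⟨a, ⟨hl, hf⟩, rfl⟩ | ⟨a, ⟨hl, hf⟩, rfl⟩) <;> exact ⟨by simp [hl], hf⟩
    · rintro v ⟨hl, hf⟩
      have hne : v ≠ [] := by intro h; rw [h] at hl; simp at hl
      have hsplit2 : v.dropLast ++ [v.getLast hne] = v := List.dropLast_append_getLast hne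
      have hdll : v.dropLast.length = n := by
        simp [List.length_dropLast, hl]
      cases hgl : v.getLast hne
      · left
        refine ⟨v.dropLast, ⟨hdll, ?_⟩, ?_⟩
        · rw [← hgl, hsplit2]; exact hf
        · simp only [← hgl, hsplit2]
      · right
        refine ⟨v.dropLast, ⟨hdll, ?_⟩, ?_⟩
        · rw [← hgl, hsplit2]; exact hf
        · simp only [← hgl, hsplit2]
  calc icomplexity w (n+1) = (A' ∪ B').ncard := by rw [icomp_eq, hsplit]
    _ = A'.ncard + B'.ncard :=
        Set.ncard_union_eq hdisj (hAfin.image _) (hBfin.image _)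
    _ = A.ncard + B.ncard := by
        rw [Set.ncard_image_of_injective A hinjf, Set.ncard_image_of_injective B hinjt]
    _ = (A ∪ B).ncard + (A ∩ B).ncard :=
        (Set.ncard_union_add_ncard_inter A B hAfin hBfin).symm
    _ = icomplexity w n + (RSset w n).ncard := by rw [hunion, hinter, icomp_eq]

lemma win_step {w : ℕ → Bool} {i i' n : ℕ} (h : win w i n = win w i' n)
    (hl : w (i + n) = w (i' + n)) : win w (i+1) n = win w (i'+1) n := by
  rw [win_eq_win] at h ⊢
  intro x hx
  rcases Nat.lt_or_ge (x+1) n with h1 | h1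
  · have h3 := h (x+1) h1
    have e1 : i + (x+1) = i + 1 + x := by omega
    have e2 : i' + (x+1) = i' + 1 + x := by omega
    rw [e1, e2] at h3
    exact h3
  · have hxn : x + 1 = n := by omega
    have : i + 1 + x = i + n := by omega
    rw [this]
    have : i' + 1 + x = i' + n := by omega
    rw [this]
    exact hl

/-- Morse–Hedlund: no right special factor of length n implies ultimate periodicity -/
lemma MH {w : ℕ → Bool} {n : ℕ} (h : ∀ u : List Bool, u.length = n → ¬ RSp w u) :
    UltimatelyPeriodic w := by
  classical
  rcases Nat.eq_zero_or_pos n with rfl | hn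
  · -- some letter never occurs
    have h2 := h [] rfl
    rw [RSp] at h2
    push_neg at h2
    by_cases hf : IsFactor w ([] ++ [false])
    · have ht := h2 hf
      have hall : ∀ i, w i = false := by
        intro i
        by_contra hb
        have : w i = true := by revert hb; cases w i <;> simp
        apply ht
        refine ⟨i, ?_⟩
        simp [List.range_succ, this]
      exact ⟨1, le_refl 1, 0, fun i _ => by rw [hall, hall]⟩
    · have hall : ∀ i, w i = true := by
        intro i
        by_contra hb
        have hwi : w i = false := by revert hb; cases w i <;> simp
        apply hf
        refine ⟨i, ?_⟩
        simp [List.range_succ, hwi]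
      exact ⟨1, le_refl 1, 0, fun i _ => by rw [hall, hall]⟩
  · -- pigeonhole on windows
    have hdet : ∀ i i', win w i n = win w i' n → w (i + n) = w (i' + n) := by
      intro i i' hww
      by_contra hne
      apply h (win w i n) (by simp)
      have h1 : IsFactor w (win w i n ++ [w (i + n)]) := by
        rw [← win_succ_r]; exact isFactor_win w i (n+1)
      have h2 : IsFactor w (win w i n ++ [w (i' + n)]) := by
        rw [hww, ← win_succ_r]; exact isFactor_win w i' (n+1)
      constructor
      · cases hc : w (i + n)
        · rwa [hc] at h1
        · have : w (i' + n) = false := by revert hne; rw [hc]; cases w (i' + n) <;> simp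
          rwa [this] at h2
      · cases hc : w (i + n)
        · have : w (i' + n) = true := by revert hne; rw [hc]; cases w (i' + n) <;> simp
          rwa [this] at h2
        · rwa [hc] at h1
    have : ∃ i j : ℕ, i ≠ j ∧ win w i n = win w j n := by
      have finw : Finite {l : List Bool // l.length = n} :=
        (List.finite_length_eq Bool n).to_subtype
      obtain ⟨i, j, hne, heq⟩ := Finite.exists_ne_map_eq_of_infinite
        (fun i : ℕ => (⟨win w i n, by simp⟩ : {l : List Bool // l.length = n}))
      exact ⟨i, j, hne, by simpa using heq⟩
    obtain ⟨i, j, hne, heq⟩ := this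
    wlog hij : i < j generalizing i j
    · exact this j i hne.symm heq.symm (by omega)
    refine ⟨j - i, by omega, i, ?_⟩
    have key : ∀ d, win w (i + d) n = win w (j + d) n := by
      intro d
      induction d with
      | zero => simpa using heq
      | succ d ih =>
        have := win_step ih (hdet _ _ ih)
        have e1 : i + (d+1) = i + d + 1 := by omega
        have e2 : j + (d+1) = j + d + 1 := by omega
        rw [e1, e2]
        exact this
    intro k hk
    have hk2 : k + (j - i) = j + (k - i) := by omega
    have hk3 : k = i + (k - i) := by omega
    have := (win_eq_win).1 (key (k - i)) 0 hn
    rw [Nat.add_zero, Nat.add_zero] at this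
    rw [hk2, ← this, ← hk3]

/-- ultimately periodic words have bounded complexity -/
lemma UP_bound {w : ℕ → Bool} (h : UltimatelyPeriodic w) :
    ∃ C, ∀ n, icomplexity w n ≤ C := by
  obtain ⟨p, hp, M, hper⟩ := h
  refine ⟨M + p, fun n => ?_⟩
  have occ_small : ∀ i, ∃ i' < M + p, win w i' n = win w i n := by
    intro i
    induction i using Nat.strong_induction_on with
    | _ i ih =>
      rcases Nat.lt_or_ge i (M + p) with h1 | h1
      · exact ⟨i, h1, rfl⟩
      · obtain ⟨i', hi', heq⟩ := ih (i - p) (by omega)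
        refine ⟨i', hi', ?_⟩
        rw [heq, win_eq_win]
        intro x hx
        have e : i - p + x + p = i + x := by omega
        have := hper (i - p + x) (by omega)
        rw [e] at this
        exact this.symm
  have hsub : Fset w n ⊆ (fun i => win w i n) '' (Set.Iio (M + p)) := by
    rintro u ⟨hl, i, hu⟩
    obtain ⟨i', hi', heq⟩ := occ_small i
    refine ⟨i', hi', ?_⟩
    have hu' : u = win w i n := by rw [← hl]; exact hu
    exact heq.trans hu'.symm
  calc icomplexity w n ≤ ((fun i => win w i n) '' (Set.Iio (M + p))).ncard :=
        Set.ncard_le_ncard hsub ((Set.finite_Iio _).image _)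
    _ ≤ (Set.Iio (M + p)).ncard := Set.ncard_image_le (Set.finite_Iio _)
    _ = M + p := by
        rw [← Finset.coe_range, Set.ncard_coe_finset, Finset.card_range]

lemma notUP_of_H1 {w : ℕ → Bool} (H1 : ∀ n, 1 ≤ n → icomplexity w n = n + 1) :
    ¬ UltimatelyPeriodic w := by
  intro hup
  obtain ⟨C, hC⟩ := UP_bound hup
  have h1 := H1 (C + 1) (by omega)
  have h2 := hC (C + 1)
  omega

end Sturm


namespace Sturm

lemma chain_lower {w : ℕ → Bool} (hne : ∀ n, (RSset w n).Nonempty) :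
    ∀ n, n + 1 ≤ icomplexity w n := by
  intro n
  induction n with
  | zero => rw [p0]
  | succ n ih =>
    have h2 := CNT w n
    have h3 : 1 ≤ (RSset w n).ncard := (Set.ncard_pos (RSset_finite w n)).2 (hne n)
    omega

/-- recurrence: in a word of full complexity, every factor occurs beyond any bound -/
lemma REC {w : ℕ → Bool} (H1 : ∀ n, 1 ≤ n → icomplexity w n = n + 1)
    {u : List Bool} (hu : IsFactor w u) (N : ℕ) :
    ∃ i, N ≤ i ∧ u = win w i u.length := by
  by_contra hcon
  push_neg at hcon
  rcases Nat.eq_zero_or_pos u.length with hL | hL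
  · have h0 : u = [] := by rwa [List.length_eq_zero_iff] at hL
    exact hcon N (le_refl N) (by rw [h0]; rfl)
  set w' : ℕ → Bool := fun k => w (k + N) with hw'
  have hwin : ∀ i n, win w' i n = win w (i + N) n := by
    intro i n
    apply List.ext_getElem (by simp)
    intro j h1 h2
    have hj : j < n := by simpa using h1
    rw [win_getElem w' i n j hj, win_getElem w (i+N) n j hj, hw']
    simp only []
    congr 1
    omega
  have hfac' : ∀ v, IsFactor w' v → IsFactor w v := by
    intro v hv
    rw [isFactor_iff_win] at hv ⊢
    obtain ⟨i, hv⟩ := hv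
    exact ⟨i + N, by rw [hv, hwin]; simp⟩
  have hnu : ¬ IsFactor w' u := by
    intro hu'
    rw [isFactor_iff_win] at hu'
    obtain ⟨i, hi⟩ := hu'
    exact hcon (i + N) (by omega) (by rw [← hwin]; exact hi)
  have hsub : Fset w' u.length ⊆ Fset w u.length \ {u} := by
    rintro v ⟨hl, hf⟩
    refine ⟨⟨hl, hfac' v hf⟩, ?_⟩
    intro hv
    rw [Set.mem_singleton_iff] at hv
    subst hv
    exact hnu hf
  have hbound : icomplexity w' u.length ≤ u.length := by
    have h1 : (Fset w u.length \ {u}).ncard = icomplexity w u.length - 1 := by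
      rw [icomp_eq]
      exact Set.ncard_diff_singleton_of_mem (s := Fset w u.length) ⟨rfl, hu⟩
    have h2 : icomplexity w' u.length ≤ (Fset w u.length \ {u}).ncard :=
      Set.ncard_le_ncard hsub ((Fset_finite w u.length).diff)
    have h3 := H1 u.length hL
    omega
  have hex : ∃ n, RSset w' n = ∅ := by
    by_contra hall
    push_neg at hall
    have hne : ∀ n, (RSset w' n).Nonempty := hall
    have := chain_lower hne u.length
    omega
  obtain ⟨n0, hn0⟩ := hex
  have hup' : UltimatelyPeriodic w' := by
    apply MH (n := n0)
    intro v hvl hrs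
    have : v ∈ RSset w' n0 := ⟨hvl, hrs⟩
    rw [hn0] at this
    exact this
  obtain ⟨p, hp, M, hper⟩ := hup'
  have hup : UltimatelyPeriodic w := by
    refine ⟨p, hp, M + N, fun i hi => ?_⟩
    have h2 := hper (i - N) (by omega)
    rw [hw'] at h2
    simp only [] at h2
    have e1 : i - N + p + N = i + p := by omega
    have e2 : i - N + N = i := by omega
    rw [e1, e2] at h2
    exact h2
  exact notUP_of_H1 H1 hup

/-- unique right special factor of each length -/
lemma URS {w : ℕ → Bool} (H1 : ∀ n, 1 ≤ n → icomplexity w n = n + 1) (n : ℕ) :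
    ∃ t : List Bool, (t.length = n ∧ RSp w t) ∧
      ∀ u : List Bool, u.length = n → RSp w u → u = t := by
  have hcnt := CNT w n
  have hn1 : icomplexity w (n+1) = n + 2 := H1 (n+1) (by omega)
  have hn0 : icomplexity w n = n + 1 := by
    rcases Nat.eq_zero_or_pos n with rfl | hn
    · exact p0 w
    · exact H1 n hn
  have hone : (RSset w n).ncard = 1 := by omega
  obtain ⟨t, ht⟩ := Set.ncard_eq_one.1 hone
  have htm : t ∈ RSset w n := by rw [ht]; rfl
  refine ⟨t, ⟨htm.1, htm.2⟩, fun u hul hrs => ?_⟩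
  have : u ∈ RSset w n := ⟨hul, hrs⟩
  rw [ht] at this
  exact this

lemma diff_prefix : ∀ (u v : List Bool), u.length = v.length → u ≠ v →
    ∃ (s u₂ v₂ : List Bool) (x y : Bool), x ≠ y ∧ u = s ++ x :: u₂ ∧ v = s ++ y :: v₂ := by
  intro u
  induction u with
  | nil =>
    intro v hl hne
    rw [List.length_nil, eq_comm, List.length_eq_zero_iff] at hl
    exact absurd hl.symm hne
  | cons a u ih =>
    intro v hl hne
    rcases v with _ | ⟨b, v⟩
    · simp at hl
    · by_cases hab : a = b
      · subst hab
        have hne' : u ≠ v := by intro h; exact hne (by rw [h])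
        obtain ⟨s, u₂, v₂, x, y, hxy, hu, hv⟩ := ih v (by simpa using hl) hne'
        exact ⟨a :: s, u₂, v₂, x, y, hxy, by rw [hu]; rfl, by rw [hv]; rfl⟩
      · exact ⟨[], u, v, a, b, hab, rfl, rfl⟩

lemma diff_suffix (u v : List Bool) (hl : u.length = v.length) (hne : u ≠ v) :
    ∃ (s u₂ v₂ : List Bool) (x y : Bool), x ≠ y ∧ u = u₂ ++ x :: s ∧ v = v₂ ++ y :: s := by
  have h1 : u.reverse ≠ v.reverse := fun h => hne (by
    have := congrArg List.reverse h
    simpa using this)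
  obtain ⟨s, u₂, v₂, x, y, hxy, hu, hv⟩ := diff_prefix u.reverse v.reverse (by simp [hl]) h1
  refine ⟨s.reverse, u₂.reverse, v₂.reverse, x, y, hxy, ?_, ?_⟩
  · have h2 := congrArg List.reverse hu
    simpa using h2
  · have h2 := congrArg List.reverse hv
    simpa using h2

lemma height_sandwich (s : List Bool) :
    height (true :: (s ++ [true])) = height s + 2 ∧
      height (false :: (s ++ [false])) = height s := by
  constructor <;> (simp [height, List.count_cons, List.count_append] <;> omega)

/-- a balanced word has at most one right special factor of each length -/
lemma BRS {w : ℕ → Bool} (hb : BalancedWord w) (n : ℕ) : (RSset w n).Subsingleton := by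
  intro u hu v hv
  by_contra hne
  obtain ⟨s, u₂, v₂, x, y, hxy, hu2, hv2⟩ := diff_suffix u v (by rw [hu.1, hv.1]) hne
  have key : IsFactor w (true :: (s ++ [true])) → IsFactor w (false :: (s ++ [false])) → False := by
    intro f1 f2
    have hbal := hb _ _ f1 f2 (by simp)
    have e1 := (height_sandwich s).1
    have e2 := (height_sandwich s).2
    rw [e1, e2] at hbal
    have h3 : ((height s + 2 : ℕ) : ℤ) - (height s : ℤ) = 2 := by push_cast; ring
    rw [h3] at hbal
    norm_num at hbal
  cases x <;> cases y <;> try exact hxy rfl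
  · -- x = false, y = true
    apply key
    · exact factor_of_suffix ⟨v₂, by rw [hv2]; simp⟩ hv.2.2
    · exact factor_of_suffix ⟨u₂, by rw [hu2]; simp⟩ hu.2.1
  · -- x = true, y = false
    apply key
    · exact factor_of_suffix ⟨u₂, by rw [hu2]; simp⟩ hu.2.2
    · exact factor_of_suffix ⟨v₂, by rw [hv2]; simp⟩ hv.2.1

/-- the reverse direction of the main theorem -/
lemma reverse_dir {w : ℕ → Bool} (hb : BalancedWord w) (hnup : ¬ UltimatelyPeriodic w) :
    ∀ n, icomplexity w n = n + 1 := by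
  intro n
  induction n with
  | zero => exact p0 w
  | succ n ih =>
    have hcnt := CNT w n
    have hpos : (RSset w n).Nonempty := by
      by_contra hne
      apply hnup
      apply MH (n := n)
      intro u hul hrs
      exact hne ⟨u, hul, hrs⟩
    have h1 : 1 ≤ (RSset w n).ncard := (Set.ncard_pos (RSset_finite w n)).2 hpos
    have h2 : (RSset w n).ncard ≤ 1 := by
      rcases (BRS hb n).eq_empty_or_singleton with h | ⟨a, h⟩
      · rw [h]; simp
      · rw [h]; simp
    omega

end Sturm


namespace Sturm

lemma height_cons (a : Bool) (l : List Bool) :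
    height (a :: l) = (cond a 1 0) + height l := by
  cases a <;> simp [height, List.count_cons] <;> omega

lemma height_split (a x : Bool) (s r : List Bool) :
    height (a :: (s ++ x :: r)) = (cond a 1 0) + height s + (cond x 1 0) + height r := by
  cases a <;> cases x <;> simp [height, List.count_cons, List.count_append] <;> omega

lemma bool_ne_iff {a b : Bool} (h : a ≠ b) : b = !a := by
  cases a <;> cases b <;> simp_all

/-- from unbalancedness, extract a palindrome `t` with `0t0` and `1t1` factors -/
lemma exists_palindrome {w : ℕ → Bool} (hnb : ¬ BalancedWord w) :
    ∃ t : List Bool, t.reverse = t ∧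
      IsFactor w (false :: (t ++ [false])) ∧ IsFactor w (true :: (t ++ [true])) := by
  classical
  set Q : ℕ → Prop := fun n => ∃ u v : List Bool, IsFactor w u ∧ IsFactor w v ∧
    u.length = n ∧ v.length = n ∧ (height v : ℤ) + 2 ≤ (height u : ℤ) with hQ
  have hex : ∃ n, Q n := by
    rw [BalancedWord] at hnb
    push_neg at hnb
    obtain ⟨u, v, hu, hv, hl, hh⟩ := hnb
    rcases abs_cases ((height u : ℤ) - (height v : ℤ)) with ⟨he, -⟩ | ⟨he, -⟩
    · exact ⟨u.length, u, v, hu, hv, rfl, hl.symm, by omega⟩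
    · exact ⟨u.length, v, u, hv, hu, hl.symm, rfl, by omega⟩
  set N := Nat.find hex with hN
  obtain ⟨u, v, hufac, hvfac, hul, hvl, hh⟩ := Nat.find_spec hex
  rw [← hN] at hul hvl
  have hmin : ∀ k, k < N → ¬ Q k := fun k hk => Nat.find_min hex hk
  -- u and v are nonempty
  rcases u with _ | ⟨a, u'⟩
  · rw [List.length_nil] at hul
    have hv0 : v.length = 0 := by omega
    rw [List.length_eq_zero_iff] at hv0
    subst hv0
    simp [height] at hh
  · rcases v with _ | ⟨b, v'⟩
    · rw [List.length_nil] at hvl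
      rw [← hvl] at hul
      simp at hul
    -- first letters differ, a = true, b = false
    have htails : u'.length = v'.length := by
      simp only [List.length_cons] at hul hvl
      omega
    have hufac' : IsFactor w u' := factor_of_suffix ⟨[a], rfl⟩ hufac
    have hvfac' : IsFactor w v' := factor_of_suffix ⟨[b], rfl⟩ hvfac
    have hab : a = true ∧ b = false := by
      by_contra hcon
      -- otherwise we find a shorter unbalanced pair
      have hQ' : Q u'.length := by
        cases a <;> cases b <;> simp at hcon
        · -- a = b = false : drop heads
          refine ⟨u', v', hufac', hvfac', rfl, htails.symm, ?_⟩
          rw [height_cons, height_cons] at hh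
          simp only [Bool.cond_true, Bool.cond_false] at hh
          push_cast at hh ⊢
          omega
        · -- a = false, b = true : even worse
          refine ⟨u', v', hufac', hvfac', rfl, htails.symm, ?_⟩
          rw [height_cons, height_cons] at hh
          simp only [Bool.cond_true, Bool.cond_false] at hh
          push_cast at hh ⊢
          omega
        · -- a = b = true
          refine ⟨u', v', hufac', hvfac', rfl, htails.symm, ?_⟩
          rw [height_cons, height_cons] at hh
          simp only [Bool.cond_true, Bool.cond_false] at hh
          push_cast at hh ⊢
          omega
      have : u'.length < N := by
        rw [← hul]
        simp
      exact hmin _ this hQ'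
    obtain ⟨rfl, rfl⟩ := hab
    -- second: u' and v' split at first difference
    have hne' : u' ≠ v' := by
      rintro rfl
      rw [height_cons, height_cons] at hh
      simp only [Bool.cond_true, Bool.cond_false] at hh
      push_cast at hh
      omega
    obtain ⟨s, u₂, v₂, x, y, hxy, hu2, hv2⟩ := diff_prefix u' v' htails hne'
    have hlen2 : u₂.length = v₂.length := by
      rw [hu2, hv2] at htails
      simp at htails
      omega
    have hxy' : x = true ∧ y = false := by
      by_contra hcon
      have hx : x = false := by
        cases x
        · rfl
        · exfalso; apply hcon; exact ⟨rfl, (bool_ne_iff hxy).symm ▸ by simp⟩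
      have hy : y = true := by rw [bool_ne_iff hxy, hx]; rfl
      subst hx hy
      -- drop the balanced prefixes : u₂ v₂ unbalanced, shorter
      have hQ' : Q u₂.length := by
        refine ⟨u₂, v₂, ?_, ?_, rfl, hlen2.symm, ?_⟩
        · exact factor_of_suffix ⟨true :: s ++ [false], by rw [hu2]; simp⟩ hufac
        · exact factor_of_suffix ⟨false :: s ++ [true], by rw [hv2]; simp⟩ hvfac
        · rw [hu2] at hh
          rw [hv2] at hh
          rw [height_split, height_split] at hh
          simp only [Bool.cond_true, Bool.cond_false] at hh
          push_cast at hh ⊢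
          omega
      have hlt : u₂.length < N := by
        rw [← hul, hu2]
        simp
        omega
      exact hmin _ hlt hQ'
    obtain ⟨rfl, rfl⟩ := hxy'
    -- now we have factors  true :: s ++ [true]  and  false :: s ++ [false]
    have Tt1 : IsFactor w (true :: (s ++ [true])) :=
      factor_of_prefix ⟨u₂, by rw [hu2]; simp⟩ hufac
    have Tf0 : IsFactor w (false :: (s ++ [false])) :=
      factor_of_prefix ⟨v₂, by rw [hv2]; simp⟩ hvfac
    have hsN : s.length + 2 ≤ N := by
      rw [← hul, hu2]
      simp
      try omega
    -- s is a palindrome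
    have hpal : s.reverse = s := by
      by_contra hpal
      set m' := s.length with hm'
      have hdiffex : ∃ q, q < m' ∧ s.getD q false ≠ s.getD (m' - 1 - q) false := by
        by_contra hall
        push_neg at hall
        apply hpal
        apply List.ext_getElem (by simp)
        intro j h1 h2
        have hj : j < m' := by simpa using h2
        rw [List.getElem_reverse]
        have := hall j hj
        rw [List.getD_eq_getElem _ _ (by omega : j < s.length),
          List.getD_eq_getElem _ _ (by omega : m' - 1 - j < s.length)] at this
        simp only [← hm']
        exact this.symm
      set P : ℕ → Prop := fun q => q < m' ∧ s.getD q false ≠ s.getD (m' - 1 - q) false with hP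
      have hq := Nat.find_spec hdiffex
      set q := Nat.find hdiffex with hqdef
      obtain ⟨hqm, hqne⟩ := hq
      have hqmin : ∀ j, j < q → s.getD j false = s.getD (m' - 1 - j) false := by
        intro j hj
        have := Nat.find_min hdiffex hj
        simp only [not_and, not_not] at this
        exact this (by omega)
      set s₀ := s.take q with hs₀
      have hs₀len : s₀.length = q := by
        rw [hs₀, List.length_take]
        omega
      obtain ⟨d, hd⟩ : ∃ d : Bool, d = s.getD q false := ⟨_, rfl⟩
      rw [← hd] at hqne
      have hdval : s[q]'(by omega) = d := by
        rw [hd, List.getD_eq_getElem _ _ (by omega : q < s.length)]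
      have heval : s[m' - 1 - q]'(by omega) = !d := by
        have h5 := bool_ne_iff hqne
        rw [← h5]
        exact List.getD_eq_getElem _ _ (by omega : m' - 1 - q < s.length) ▸ rfl
      have hgetD : ∀ i, i < q → s₀.getD i false = s.getD i false := by
        intro i hi
        rw [hs₀, List.getD_eq_getElem _ _ (by simpa [List.length_take] using (by omega : i < min q s.length)),
          List.getElem_take, ← List.getD_eq_getElem _ _ (by omega : i < s.length)]
      have hdrop : s.drop (m' - q) = s₀.reverse := by
        apply List.ext_getElem (by simp [hs₀len]; omega)
        intro j h1 h2
        have hj : j < q := by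
          simpa [hs₀len] using h2
        rw [List.getElem_drop, List.getElem_reverse]
        rw [← List.getD_eq_getElem s false (by omega : m' - q + j < s.length),
          ← List.getD_eq_getElem s₀ false (by omega : s₀.length - 1 - j < s₀.length)]
        rw [hs₀len, hgetD (q - 1 - j) (by omega), hqmin (q - 1 - j) (by omega)]
        congr 1
        omega
      -- decomposition of s as s₀ ++ d :: rest
      have hsdecomp : s = (s₀ ++ [d]) ++ s.drop (q + 1) := by
        have h1 : s.take (q+1) = s₀ ++ [d] := by
          rw [List.take_succ, hs₀]
          congr 1
          rw [List.getElem?_eq_getElem (by omega : q < s.length)]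
          rw [hdval]
          rfl
        rw [← h1, List.take_append_drop]
      -- the word  d :: s₀ ++ [d]  is a factor
      have FA : IsFactor w (d :: (s₀ ++ [d])) := by
        have hpref : (d :: (s₀ ++ [d])) <+: (d :: (s ++ [d])) := by
          refine ⟨s.drop (q+1) ++ [d], ?_⟩
          conv_rhs => rw [hsdecomp]
          simp
        cases d
        · exact factor_of_prefix hpref Tf0
        · exact factor_of_prefix hpref Tt1
      -- the word  !d :: s₀.reverse ++ [!d]  is a factor
      have FB : IsFactor w ((!d) :: (s₀.reverse ++ [!d])) := by
        have hdrop2 : s.drop (m' - 1 - q) = (!d) :: s₀.reverse := by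
          rw [List.drop_eq_getElem_cons (by omega : m' - 1 - q < s.length)]
          rw [heval]
          have e : m' - 1 - q + 1 = m' - q := by omega
          rw [e, hdrop]
        have hsuf : ((!d) :: (s₀.reverse ++ [!d])) <:+ ((!d) :: (s ++ [!d])) := by
          refine ⟨(!d) :: s.take (m' - 1 - q), ?_⟩
          have hkey : s ++ [!d] = s.take (m' - 1 - q) ++ ((!d) :: (s₀.reverse ++ [!d])) := by
            conv_lhs => rw [← List.take_append_drop (m' - 1 - q) s]
            rw [hdrop2]
            simp
          rw [List.cons_append, ← hkey]
        cases d
        · simp only [Bool.not_false] at hsuf ⊢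
          exact factor_of_suffix hsuf Tt1
        · simp only [Bool.not_true] at hsuf ⊢
          exact factor_of_suffix hsuf Tf0
      -- contradiction with minimality
      have hQ' : Q (q + 2) := by
        cases d
        · simp only [Bool.not_false] at FB
          refine ⟨true :: (s₀.reverse ++ [true]), false :: (s₀ ++ [false]), by simpa using FB,
            by simpa using FA, by simp [hs₀len], by simp [hs₀len], ?_⟩
          have e1 := (height_sandwich s₀.reverse).1
          have e2 := (height_sandwich s₀).2
          rw [e1, e2]
          have : height s₀.reverse = height s₀ := by simp [height]
          rw [this]
          push_cast
          omega
        · simp only [Bool.not_true] at FB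
          refine ⟨true :: (s₀ ++ [true]), false :: (s₀.reverse ++ [false]), by simpa using FA,
            by simpa using FB, by simp [hs₀len], by simp [hs₀len], ?_⟩
          have e1 := (height_sandwich s₀).1
          have e2 := (height_sandwich s₀.reverse).2
          rw [e1, e2]
          have : height s₀.reverse = height s₀ := by simp [height]
          rw [this]
          push_cast
          omega
      exact hmin (q + 2) (by omega) hQ'
    exact ⟨s, hpal, Tf0, Tt1⟩

end Sturm


namespace Sturm

/-- The main contradiction: full complexity plus a palindrome `t` with `c t c` a factor
and `c t (!c)` not a factor forces ultimate periodicity. -/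
lemma FIN {w : ℕ → Bool} (H1 : ∀ n, 1 ≤ n → icomplexity w n = n + 1)
    {t : List Bool} {m : ℕ} (hm : t.length = m) (hpal : t.reverse = t) (c : Bool)
    (h1 : IsFactor w (c :: (t ++ [c])))
    (h3 : IsFactor w (t ++ [!c]))
    (h2 : ¬ IsFactor w (c :: (t ++ [!c]))) : False := by
  classical
  obtain ⟨t', ⟨ht'len, ht'rs⟩, ht'uniq⟩ := URS H1 m
  have htfac : IsFactor w (t ++ [c]) := factor_of_suffix ⟨[c], rfl⟩ h1
  have htRS : RSp w t := by
    cases c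
    · exact ⟨htfac, by simpa using h3⟩
    · exact ⟨by simpa using h3, htfac⟩
  have uniq : ∀ u : List Bool, u.length = m → RSp w u → u = t :=
    fun u hu hrs => (ht'uniq u hu hrs).trans (ht'uniq t hm htRS).symm
  -- determinism away from t
  have DET : ∀ i i', win w i m = win w i' m → win w i m ≠ t →
      w (i + m) = w (i' + m) := by
    intro i i' hww hne
    by_contra hnel
    apply hne
    apply uniq _ (by simp)
    have hx1 : IsFactor w (win w i m ++ [w (i + m)]) := by
      rw [← win_succ_r]; exact isFactor_win w i (m+1)
    have hx2 : IsFactor w (win w i m ++ [w (i' + m)]) := by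
      rw [hww, ← win_succ_r]; exact isFactor_win w i' (m+1)
    constructor
    · cases hc : w (i + m)
      · rwa [hc] at hx1
      · have hz : w (i' + m) = false := by
          revert hnel; rw [hc]; cases w (i' + m) <;> simp
        rwa [hz] at hx2
    · cases hc : w (i + m)
      · have hz : w (i' + m) = true := by
          revert hnel; rw [hc]; cases w (i' + m) <;> simp
        rwa [hz] at hx2
      · rwa [hc] at hx1
  have htonly : IsFactor w t := factor_of_prefix ⟨[c], rfl⟩ htfac
  have NEXT : ∀ i, ∃ j, i < j ∧ win w j m = t := by
    intro i
    obtain ⟨j, hj, he⟩ := REC H1 htonly (i+1)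
    rw [hm] at he
    exact ⟨j, by omega, he.symm⟩
  -- reading off letters at occurrences
  have occ_getD : ∀ i, win w i m = t → ∀ x, x < m → t.getD x false = w (i + x) := by
    intro i hocc x hx
    rw [← hocc, List.getD_eq_getElem _ _ (by simp; omega : x < (win w i m).length),
      win_getElem _ _ _ _ hx]
  have hpalD : ∀ x, x < m → t.getD x false = t.getD (m - 1 - x) false := by
    intro x hx
    conv_lhs => rw [← hpal]
    rw [List.getD_eq_getElem _ _ (by simp [hm]; omega : x < t.reverse.length),
      List.getElem_reverse, ← List.getD_eq_getElem _ _
        (by rw [hm]; omega : t.length - 1 - x < t.length)]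
    rw [hm]
  -- banned extension
  have BAN : ∀ k, 1 ≤ k → win w k m = t → w (k - 1) = c → w (k + m) = c := by
    intro k hk hocc hprev
    by_contra hne
    apply h2
    have hnotc : w (k + m) = !c := by
      cases c with
      | false =>
        cases hval : w (k + m) with
        | false => exact absurd hval hne
        | true => rfl
      | true =>
        cases hval : w (k + m) with
        | false => rfl
        | true => exact absurd hval hne
    have hwin2 : win w (k-1) (m+2) = c :: (t ++ [!c]) := by
      have e : k - 1 + 1 = k := by omega
      rw [show m + 2 = (m+1)+1 from rfl, win_succ_l, e, win_succ_r, hocc, hprev, hnotc]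
    rw [← hwin2]
    exact isFactor_win _ _ _
  -- the key return lemma
  have SUB : ∀ i j, win w i m = t → win w j m = t → i < j →
      (∀ k, i < k → k < j → win w k m ≠ t) → w (j - 1) = w (i + m) := by
    intro i j hi hj hij hbet
    have hr : j ≤ i + m + 1 := by
      by_contra hbig
      push_neg at hbig
      have prop : ∀ p p' : ℕ, i < p → p < p' → p' ≤ j → win w p m = win w p' m → False := by
        intro p p' hip hpp' hp'j hweq
        have step : ∀ s, s ≤ j - p' → win w (p+s) m = win w (p'+s) m := by
          intro s
          induction s with
          | zero => intro _; simpa using hweq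
          | succ s ih =>
            intro hs
            have h4 : win w (p+s) m = win w (p'+s) m := ih (by omega)
            have h5 : win w (p+s) m ≠ t := hbet (p+s) (by omega) (by omega)
            have h6 := win_step h4 (DET _ _ h4 h5)
            have e1 : p + (s+1) = p + s + 1 := by omega
            have e2 : p' + (s+1) = p' + s + 1 := by omega
            rw [e1, e2]
            exact h6
        have h7 := step (j - p') (le_refl _)
        have e3 : p' + (j - p') = j := by omega
        rw [e3, hj] at h7
        exact hbet (p + (j - p')) (by omega) (by omega) h7
      rcases Nat.eq_zero_or_pos m with hm0 | hmpos
      · -- m = 0 : every window is t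
        have ht0 : t = [] := by rw [← List.length_eq_zero_iff, hm, hm0]
        apply hbet (i+1) (by omega) (by omega)
        rw [hm0, ht0]
        rfl
      · have hFcard : (Fset_finite w m).toFinset.card = m + 1 := by
          rw [← Set.ncard_eq_toFinset_card _ (Fset_finite w m)]
          rw [← icomp_eq]
          exact H1 m hmpos
        obtain ⟨a, -, b, -, hab, hfeq⟩ :=
          Finset.exists_ne_map_eq_of_card_lt_of_maps_to
            (s := (Finset.univ : Finset (Fin (m+2))))
            (t := (Fset_finite w m).toFinset)
            (f := fun a : Fin (m+2) => win w (i+1+(a:ℕ)) m)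
            (by rw [hFcard]; simp)
            (fun a _ => by rw [Finset.mem_coe, Set.Finite.mem_toFinset]; exact win_mem_Fset w _ m)
        have habv : (a : ℕ) ≠ (b : ℕ) := fun h => hab (Fin.val_injective h)
        have hbb : (b : ℕ) ≤ m + 1 := by omega
        have haa : (a : ℕ) ≤ m + 1 := by omega
        rcases Nat.lt_or_ge (a : ℕ) (b : ℕ) with hltab | hgeab
        · exact prop (i+1+a) (i+1+b) (by omega) (by omega) (by omega) hfeq
        · have hltba : (b : ℕ) < (a : ℕ) := by omega
          exact prop (i+1+b) (i+1+a) (by omega) (by omega) (by omega) hfeq.symm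
    rcases Nat.lt_or_ge (j - i) (m + 1) with hcase | hcase
    · -- overlap case: use the palindrome
      have hb1 : j - i - 1 < m := by omega
      have e1 : w (j - 1) = t.getD (j - i - 1) false := by
        have := occ_getD i hi (j - i - 1) hb1
        rw [this]
        congr 1
        omega
      have e2 : w (i + m) = t.getD (m - (j - i)) false := by
        have := occ_getD j hj (m - (j - i)) (by omega)
        rw [this]
        congr 1
        omega
      rw [e1, e2, hpalD (j - i - 1) hb1]
      congr 1
      omega
    · -- j = i + m + 1
      have : j - 1 = i + m := by omega
      rw [this]
  -- base occurrence with letter c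
  obtain ⟨i₀, hiocc, hi₀c⟩ : ∃ i, win w i m = t ∧ w (i + m) = c := by
    obtain ⟨i, -, he⟩ := REC H1 htfac 0
    rw [show (t ++ [c]).length = m + 1 by simp [hm]] at he
    rw [win_succ_r] at he
    obtain ⟨e1, e2⟩ := List.append_inj he (by simp [hm])
    exact ⟨i, e1.symm, by simpa using e2.symm⟩
  -- invariant: all occurrences after i₀ are followed by c
  have INV : ∀ k, i₀ ≤ k → win w k m = t → w (k + m) = c := by
    intro k
    induction k using Nat.strong_induction_on with
    | _ k IH =>
      intro hik hocc
      rcases eq_or_lt_of_le hik with rfl | hlt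
      · exact hi₀c
      · set k' := Nat.findGreatest (fun x => i₀ ≤ x ∧ win w x m = t) (k-1) with hk'
        have hspec : i₀ ≤ k' ∧ win w k' m = t :=
          Nat.findGreatest_spec (P := fun x => i₀ ≤ x ∧ win w x m = t)
            (by omega : i₀ ≤ k - 1) ⟨le_refl _, hiocc⟩
        have hk'le : k' ≤ k - 1 := Nat.findGreatest_le _
        have hbet : ∀ x, k' < x → x < k → win w x m ≠ t := by
          intro x hx1 hx2 hoccx
          exact Nat.findGreatest_is_greatest hx1 (by omega) ⟨by omega, hoccx⟩
        have hsub := SUB k' k hspec.2 hocc (by omega) hbet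
        have hprev : w (k - 1) = c := by
          rw [hsub]
          exact IH k' (by omega) hspec.1 hspec.2
        exact BAN k (by omega) hocc hprev
  -- conclude ultimate periodicity
  apply notUP_of_H1 H1
  rcases Nat.eq_zero_or_pos m with hm0 | hmpos
  · have ht0 : t = [] := by rw [← List.length_eq_zero_iff, hm, hm0]
    have hconst : ∀ k, i₀ ≤ k → w k = c := by
      intro k hk
      have hocc : win w k m = t := by rw [hm0, ht0]; rfl
      have := INV k hk hocc
      rwa [hm0, Nat.add_zero] at this
    exact ⟨1, le_refl 1, i₀, fun i hi => by rw [hconst (i+1) (by omega), hconst i hi]⟩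
  · obtain ⟨j₀, hj₀gt, hj₀occ⟩ := NEXT i₀
    have key : ∀ d, win w (i₀ + d) m = win w (i₀ + d + (j₀ - i₀)) m := by
      intro d
      induction d with
      | zero =>
        rw [Nat.add_zero]
        have e : i₀ + (j₀ - i₀) = j₀ := by omega
        rw [e, hiocc, hj₀occ]
      | succ d ih =>
        have e1 : i₀ + (d+1) = i₀ + d + 1 := by omega
        have e2 : i₀ + (d+1) + (j₀ - i₀) = i₀ + d + (j₀ - i₀) + 1 := by omega
        rw [e2, e1]
        by_cases hocc : win w (i₀ + d) m = t
        · have hocc2 : win w (i₀ + d + (j₀ - i₀)) m = t := by rw [← ih]; exact hocc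
          have l1 := INV (i₀ + d) (by omega) hocc
          have l2 := INV (i₀ + d + (j₀ - i₀)) (by omega) hocc2
          exact win_step ih (by rw [l1, l2])
        · exact win_step ih (DET _ _ ih hocc)
    refine ⟨j₀ - i₀, by omega, i₀, ?_⟩
    intro i hi
    have h8 := key (i - i₀)
    have e : i₀ + (i - i₀) = i := by omega
    rw [e] at h8
    have h9 := (win_eq_win.1 h8) 0 hmpos
    rw [Nat.add_zero, Nat.add_zero] at h9
    exact h9.symm

end Sturm


/-- A right-infinite binary word is Sturmian (`p_w(n) = n + 1` for all `n ≥ 1`)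
if and only if it is balanced and not ultimately periodic. -/
theorem sturmian_iff_balanced_aperiodic (w : ℕ → Bool) :
    (∀ n, 1 ≤ n → icomplexity w n = n + 1) ↔
      (BalancedWord w ∧ ¬ UltimatelyPeriodic w) := by
  constructor
  · intro H1
    refine ⟨?_, Sturm.notUP_of_H1 H1⟩
    by_contra hnb
    obtain ⟨t, hpal, Tf0, Tt1⟩ := Sturm.exists_palindrome hnb
    by_cases hf : IsFactor w (false :: (t ++ [true]))
    · by_cases hg : IsFactor w (true :: (t ++ [false]))
      · -- both would give two distinct right special factors of length t.length + 1
        obtain ⟨t', -, huniq⟩ := Sturm.URS H1 (t.length + 1)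
        have e1 : false :: t = t' :=
          huniq _ (by simp) ⟨by simpa using Tf0, by simpa using hf⟩
        have e2 : true :: t = t' :=
          huniq _ (by simp) ⟨by simpa using hg, by simpa using Tt1⟩
        rw [← e1] at e2
        simp at e2
      · -- c = true
        refine Sturm.FIN H1 rfl hpal true Tt1 ?_ (by simpa using hg)
        have : IsFactor w (t ++ [false]) :=
          Sturm.factor_of_suffix ⟨[false], rfl⟩ Tf0
        simpa using this
    · -- c = false
      refine Sturm.FIN H1 rfl hpal false Tf0 ?_ (by simpa using hf)
      have : IsFactor w (t ++ [true]) :=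
        Sturm.factor_of_suffix ⟨[true], rfl⟩ Tt1
      simpa using this
  · rintro ⟨hb, hnup⟩
    intro n _
    exact Sturm.reverse_dir hb hnup n
end
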